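/- arXiv:1006.2291 — 3 statements merged into one kernel-verified Lean document; each statement's English description precedes it below -/
import Mathlib

section
/- Let (W,S) be a Coxeter system. The operation * is associative: for all w, w', w'' ∈ W one has (w * w') * w'' = w * (w' * w''). -/
/-!
Let (W,S) be a Coxeter system. The Demazure product operation * (where w * w' is
the unique maximal element, for the Bruhat order, of {u u' : u ≤ w, u' ≤ w'}) is
associative: (w * w') * w'' = w * (w' * w'').
-/

open CoxeterSystem

variable {B : Type*} {W : Type*}

/-- The Bruhat order on a Coxeter group: `u ≤ w` iff some reduced word for `w`
contains a subword (i.e. a sublist) that is a reduced word for `u`. -/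
def BruhatLE [Group W] {M : CoxeterMatrix B} (cs : CoxeterSystem M W) (u w : W) : Prop :=
  ∃ ω : List B, cs.IsReduced ω ∧ cs.wordProd ω = w ∧
    ∃ ω' : List B, ω'.Sublist ω ∧ cs.IsReduced ω' ∧ cs.wordProd ω' = u

/-- `IsDemazureProd cs w w' m` says that `m` is the maximal element, with respect to
the Bruhat order, of the set `{u u' : u ≤ w, u' ≤ w'}`; i.e. `m = w * w'`. -/
def IsDemazureProd [Group W] {M : CoxeterMatrix B} (cs : CoxeterSystem M W)
    (w w' m : W) : Prop :=
  (∃ u u' : W, BruhatLE cs u w ∧ BruhatLE cs u' w' ∧ m = u * u') ∧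
  (∀ u u' : W, BruhatLE cs u w → BruhatLE cs u' w' → BruhatLE cs (u * u') m)

open List in
section
section Rep
variable [Group W] {M : CoxeterMatrix B} (cs : CoxeterSystem M W)

local prefix:100 "s" => cs.simple
local prefix:100 "π" => cs.wordProd
local prefix:100 "ℓ" => cs.length

private theorem conj_simple_eq_iff (i : B) (t u : W) :
    s i * t * s i = u ↔ t = s i * u * s i := by
  constructor
  · intro h
    have : s i * (s i * t * s i) * s i = s i * u * s i := by rw [h]
    simpa [← mul_assoc, cs.simple_mul_simple_self, cs.simple_mul_simple_cancel_right] using this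
  · rintro rfl
    simp [← mul_assoc, cs.simple_mul_simple_self, cs.simple_mul_simple_cancel_right]

open Classical in
/-- The function underlying the sign permutation at index `i`. -/
noncomputable def sigmaFun (i : B) : W × ℤˣ → W × ℤˣ :=
  fun p => (s i * p.1 * s i, if p.1 = s i then -p.2 else p.2)

theorem sigmaFun_involutive (i : B) : Function.Involutive (sigmaFun cs i) := by
  classical
  rintro ⟨t, ε⟩
  simp only [sigmaFun]
  have h1 : s i * (s i * t * s i) * s i = t := by
    simp [← mul_assoc, cs.simple_mul_simple_self, cs.simple_mul_simple_cancel_right]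
  have h2 : (s i * t * s i = s i) ↔ (t = s i) := by
    rw [conj_simple_eq_iff cs]
    simp [cs.simple_mul_simple_cancel_left]
  simp only [Prod.mk.injEq]
  refine ⟨h1, ?_⟩
  by_cases ht : t = s i
  · rw [if_pos (h2.mpr ht), if_pos ht]; simp
  · rw [if_neg (fun hh => ht (h2.mp hh)), if_neg ht]

/-- The sign permutation at index `i`. -/
noncomputable def sigmaPerm (i : B) : Equiv.Perm (W × ℤˣ) :=
  (sigmaFun_involutive cs i).toPerm _

theorem sigmaPerm_apply (i : B) (p : W × ℤˣ) : sigmaPerm cs i p = sigmaFun cs i p := rfl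

theorem sigma_liftable : M.IsLiftable (sigmaPerm cs) := by
  classical
  intro i j
  rcases Nat.eq_zero_or_pos (M i j) with h0 | hpos
  · rw [h0, pow_zero]
  set m := M i j with hm
  set p : W := s i * s j with hp
  have hpm : p ^ m = 1 := cs.simple_mul_simple_pow i j
  set z : ℕ → W := fun l => s j * p ^ l with hz
  have key : ∀ (k : ℕ) (t : W) (ε : ℤˣ),
      ((sigmaPerm cs i * sigmaPerm cs j) ^ k) (t, ε) =
        (p ^ k * t * (p ^ k)⁻¹,
          (∏ l ∈ Finset.range (2 * k), (if t = z l then (-1 : ℤˣ) else 1)) * ε) := by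
    intro k
    induction k with
    | zero => intro t ε; simp
    | succ k ih =>
      intro t ε
      rw [pow_succ]
      have hz0 : (t = s j) ↔ t = z 0 := by simp [hz]
      have hzc : (s j * t * s j = s i) ↔ t = z 1 := by
        rw [conj_simple_eq_iff cs]
        simp [hz, hp, pow_one, mul_assoc]
      have step : (sigmaPerm cs i * sigmaPerm cs j) (t, ε) =
          (p * t * p⁻¹, (if t = z 1 then (-1:ℤˣ) else 1) * ((if t = z 0 then (-1:ℤˣ) else 1) * ε)) := by
        simp only [Equiv.Perm.mul_apply, sigmaPerm_apply, sigmaFun]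
        simp only [Prod.mk.injEq]
        constructor
        · simp [hp, mul_inv_rev, inv_simple, mul_assoc]
        · by_cases h1 : s j * t * s j = s i
          · rw [if_pos h1, if_pos (hzc.mp h1)]
            by_cases h0 : t = s j
            · rw [if_pos h0, if_pos (hz0.mp h0)]; simp
            · rw [if_neg h0, if_neg (fun hh => h0 (hz0.mpr hh))]
              simp
          · rw [if_neg h1, if_neg (fun hh => h1 (hzc.mpr hh))]
            by_cases h0 : t = s j
            · rw [if_pos h0, if_pos (hz0.mp h0)]
              simp
            · rw [if_neg h0, if_neg (fun hh => h0 (hz0.mpr hh))]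
              simp
      rw [Equiv.Perm.mul_apply, step, ih]
      have hshift : ∀ l : ℕ, (p * t * p⁻¹ = z l) ↔ (t = z (l + 2)) := by
        intro l
        have hzz : z (l + 2) = p⁻¹ * z l * p := by
          simp only [hz]
          have hji : p⁻¹ * s j * p = s j * p ^ 2 := by
            simp [hp, pow_two, mul_inv_rev, inv_simple, mul_assoc,
              cs.simple_mul_simple_cancel_left]
          calc s j * p ^ (l + 2) = s j * p ^ 2 * p ^ l := by rw [pow_add]; group
          _ = (p⁻¹ * s j * p) * p ^ l := by rw [hji]
          _ = p⁻¹ * (s j * p ^ l) * p := by group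
        rw [hzz]
        constructor
        · intro h; rw [← h]; group
        · intro h
          have : p * t * p⁻¹ = p * (p⁻¹ * z l * p) * p⁻¹ := by rw [← h]
          simpa [mul_assoc] using this
      have hprod : (∏ l ∈ Finset.range (2 * k), (if p * t * p⁻¹ = z l then (-1 : ℤˣ) else 1)) =
          ∏ l ∈ Finset.range (2 * k), (if t = z (l + 2) then (-1 : ℤˣ) else 1) := by
        apply Finset.prod_congr rfl
        intro l _
        simp [hshift l]
      rw [hprod]
      simp only [Prod.mk.injEq]
      constructor
      · rw [pow_succ']
        group
      · have h2k : 2 * (k + 1) = (2 * k + 1) + 1 := by ring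
        rw [h2k, Finset.prod_range_succ' (fun l => if t = z l then (-1:ℤˣ) else 1) (2*k+1),
          Finset.prod_range_succ' (fun l => if t = z (l+1) then (-1:ℤˣ) else 1) (2*k)]
        have hP : (∏ l ∈ Finset.range (2*k), (if t = z (l+1+1) then (-1:ℤˣ) else 1)) =
            ∏ l ∈ Finset.range (2*k), (if t = z (l+2) then (-1:ℤˣ) else 1) := rfl
        rw [hP]
        simp [mul_assoc]
  apply Equiv.ext
  rintro ⟨t, ε⟩
  rw [key m t ε]
  have hz' : ∀ l, z (m + l) = z l := by
    intro l; simp only [hz]; rw [pow_add, hpm, one_mul]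
  have hone : (∏ l ∈ Finset.range (2 * m), (if t = z l then (-1 : ℤˣ) else 1)) = 1 := by
    have h2m : 2 * m = m + m := by ring
    rw [h2m, Finset.prod_range_add]
    have : (∏ l ∈ Finset.range m, (if t = z (m + l) then (-1 : ℤˣ) else 1)) =
        ∏ l ∈ Finset.range m, (if t = z l then (-1 : ℤˣ) else 1) := by
      apply Finset.prod_congr rfl; intro l _; rw [hz' l]
    rw [this, ← pow_two, Int.units_sq]
  rw [hone, hpm]
  simp

end Rep

section Exchange
variable [Group W] {M : CoxeterMatrix B} (cs : CoxeterSystem M W)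

local prefix:100 "s" => cs.simple
local prefix:100 "π" => cs.wordProd
local prefix:100 "ℓ" => cs.length
local prefix:100 "ris" => cs.rightInvSeq

private theorem conj_eq_iff' (a t u : W) : a * t * a⁻¹ = u ↔ t = a⁻¹ * u * a := by
  constructor
  · rintro rfl; group
  · rintro rfl; group

/-- The sign representation of a Coxeter group. -/
noncomputable def phiRep : W →* Equiv.Perm (W × ℤˣ) := cs.lift ⟨sigmaPerm cs, sigma_liftable cs⟩

theorem phiRep_simple (i : B) : phiRep cs (s i) = sigmaPerm cs i := cs.lift_apply_simple _ i

open Classical in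
/-- The product of the signs attached to `t` along the right inversion sequence of `ω`. -/
noncomputable def signSeq (t : W) (ω : List B) : ℤˣ :=
  ((ris ω).map (fun x => if x = t then (-1 : ℤˣ) else 1)).prod

theorem phiRep_wordProd (ω : List B) (t : W) (ε : ℤˣ) :
    phiRep cs (π ω) (t, ε) = (π ω * t * (π ω)⁻¹, signSeq cs t ω * ε) := by
  classical
  induction ω generalizing ε with
  | nil => simp [signSeq]
  | cons i ω ih =>
    rw [wordProd_cons, map_mul, Equiv.Perm.mul_apply, ih, phiRep_simple, sigmaPerm_apply]
    simp only [sigmaFun]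
    have hcond : (π ω * t * (π ω)⁻¹ = s i) ↔ ((π ω)⁻¹ * s i * π ω = t) := by
      rw [conj_eq_iff']
      exact eq_comm
    have hsign : signSeq cs t (i :: ω) =
        (if (π ω)⁻¹ * s i * π ω = t then (-1 : ℤˣ) else 1) * signSeq cs t ω := by
      simp [signSeq, rightInvSeq]
    simp only [Prod.mk.injEq]
    constructor
    · simp [mul_inv_rev, inv_simple, mul_assoc]
    · rw [hsign]
      by_cases h : π ω * t * (π ω)⁻¹ = s i
      · rw [if_pos h, if_pos (hcond.mp h)]
        simp
      · rw [if_neg h, if_neg (fun hh => h (hcond.mpr hh))]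
        simp

/-- The sign of the reflection `t` relative to `w`. -/
noncomputable def eta (w t : W) : ℤˣ := (phiRep cs w (t, 1)).2

theorem eta_eq_signSeq (ω : List B) (t : W) : eta cs (π ω) t = signSeq cs t ω := by
  rw [eta, phiRep_wordProd, mul_one]

theorem phiRep_apply (w t : W) (ε : ℤˣ) :
    phiRep cs w (t, ε) = (w * t * w⁻¹, eta cs w t * ε) := by
  obtain ⟨ω, rfl⟩ := cs.wordProd_surjective w
  rw [phiRep_wordProd, eta_eq_signSeq]

theorem eta_mul (a b t : W) : eta cs (a * b) t = eta cs b t * eta cs a (b * t * b⁻¹) := by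
  have : phiRep cs (a * b) (t, 1) = phiRep cs a (phiRep cs b (t, 1)) := by
    rw [map_mul, Equiv.Perm.mul_apply]
  rw [phiRep_apply, phiRep_apply, phiRep_apply] at this
  have := congrArg Prod.snd this
  simp only at this
  rw [eta, phiRep_apply]
  simp only [mul_one] at this ⊢
  rw [this, mul_comm]

theorem eta_one (t : W) : eta cs 1 t = 1 := by
  rw [eta, map_one]
  rfl

theorem eta_simple_self (i : B) : eta cs (s i) (s i) = -1 := by
  classical
  rw [eta, phiRep_simple, sigmaPerm_apply]
  simp [sigmaFun]

theorem eta_reflection_self {t : W} (ht : cs.IsReflection t) : eta cs t t = -1 := by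
  obtain ⟨u, i, rfl⟩ := ht
  set x := u * s i * u⁻¹ with hx
  have h1 : eta cs x x = eta cs u⁻¹ x * eta cs (u * s i) (u⁻¹ * x * (u⁻¹)⁻¹) := by
    have : x = (u * s i) * u⁻¹ := by rw [hx, mul_assoc]
    nth_rewrite 1 [this]
    rw [eta_mul]
  have h2 : u⁻¹ * x * (u⁻¹)⁻¹ = s i := by rw [hx]; group
  have h3 : eta cs (u * s i) (s i) = eta cs (s i) (s i) * eta cs u (s i * s i * (s i)⁻¹) := eta_mul ..
  have h4 : s i * s i * (s i)⁻¹ = s i := by group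
  have h5 : eta cs u⁻¹ x * eta cs u (s i) = 1 := by
    have h6 := eta_mul cs u u⁻¹ x
    rw [mul_inv_cancel, eta_one, h2] at h6
    exact h6.symm
  rw [h1, h2, h3, h4, eta_simple_self, neg_one_mul, mul_neg, h5]

theorem mem_ris_of_signSeq_ne_one {t : W} {ω : List B} (h : signSeq cs t ω ≠ 1) :
    t ∈ ris ω := by
  classical
  by_contra hmem
  apply h
  apply List.prod_eq_one
  intro x hx
  obtain ⟨y, hy, rfl⟩ := List.mem_map.mp hx
  rw [if_neg (fun hh : y = t => hmem (hh ▸ hy))]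

theorem length_mul_lt_of_eta_neg {w t : W} (h : eta cs w t = -1) : ℓ (w * t) < ℓ w := by
  obtain ⟨ω, hred, hw⟩ := cs.exists_reduced_word' w
  subst hw
  rw [eta_eq_signSeq] at h
  have hne : signSeq cs t ω ≠ 1 := by rw [h]; decide
  exact (cs.isRightInversion_of_mem_rightInvSeq hred (mem_ris_of_signSeq_ne_one cs hne)).2

theorem eta_neg_of_length_mul_lt {w t : W} (ht : cs.IsReflection t) (h : ℓ (w * t) < ℓ w) :
    eta cs w t = -1 := by
  have h1 : eta cs (w * t) t ≠ -1 := by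
    intro hc
    have := length_mul_lt_of_eta_neg cs hc
    rw [mul_assoc, ht.mul_self, mul_one] at this
    omega
  have h2 : eta cs (w * t) t = 1 := (Int.units_eq_one_or _).resolve_right h1
  have h3 : w = (w * t) * t := by rw [mul_assoc, ht.mul_self, mul_one]
  have e1 : eta cs w t = eta cs ((w * t) * t) t := congrArg (fun x => eta cs x t) h3
  rw [e1, eta_mul]
  have h4 : t * t * t⁻¹ = t := by rw [ht.mul_self, one_mul, ht.inv]
  rw [h4, h2, eta_reflection_self cs ht, mul_one]

/-- Strong exchange property, right version, for arbitrary words. -/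
theorem strong_exchange_right {t : W} (ht : cs.IsReflection t) {ω : List B}
    (h : ℓ (π ω * t) < ℓ (π ω)) :
    ∃ j < ω.length, π (ω.eraseIdx j) = π ω * t := by
  have heta : signSeq cs t ω = -1 := by
    rw [← eta_eq_signSeq]; exact eta_neg_of_length_mul_lt cs ht h
  have hmem : t ∈ ris ω := mem_ris_of_signSeq_ne_one cs (by rw [heta]; decide)
  obtain ⟨j, hj, hjt⟩ := List.mem_iff_getElem.mp hmem
  rw [cs.length_rightInvSeq] at hj
  refine ⟨j, hj, ?_⟩
  rw [← cs.wordProd_mul_getD_rightInvSeq ω j]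
  congr 1
  rw [List.getD_eq_getElem _ 1 (by rwa [cs.length_rightInvSeq])]
  exact hjt

/-- Strong exchange property, left version, in sublist form. -/
theorem strong_exchange_left {t : W} (ht : cs.IsReflection t) {ω : List B}
    (h : ℓ (t * π ω) < ℓ (π ω)) :
    ∃ σ : List B, σ.Sublist ω ∧ σ.length + 1 = ω.length ∧ π σ = t * π ω := by
  have hlen : ℓ ((π ω)⁻¹ * t) < ℓ ((π ω)⁻¹) := by
    have h1 : ℓ ((π ω)⁻¹ * t) = ℓ (t * π ω) := by
      rw [← cs.length_inv ((π ω)⁻¹ * t)]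
      rw [mul_inv_rev, inv_inv, ht.inv]
    rw [h1, cs.length_inv]
    exact h
  have hrev : π (ω.reverse) = (π ω)⁻¹ := cs.wordProd_reverse ω
  obtain ⟨j, hj, hje⟩ := strong_exchange_right cs ht (ω := ω.reverse) (by rw [hrev]; exact hlen)
  refine ⟨(ω.reverse.eraseIdx j).reverse, ?_, ?_, ?_⟩
  · have := (List.eraseIdx_sublist ω.reverse j).reverse
    rwa [List.reverse_reverse] at this
  · have hj' : j < ω.reverse.length := by simpa using hj
    have hlen2 := List.length_eraseIdx_add_one hj'
    simp only [List.length_reverse] at hlen2 ⊢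
    omega
  · rw [cs.wordProd_reverse, hje, hrev, mul_inv_rev, inv_inv, ht.inv]

/-- Deletion property: every word has a reduced sublist with the same product. -/
theorem exists_reduced_sublist (ω : List B) :
    ∃ τ : List B, τ.Sublist ω ∧ cs.IsReduced τ ∧ π τ = π ω := by
  induction ω with
  | nil =>
    refine ⟨[], by simp, ?_, rfl⟩
    show ℓ (π ([] : List B)) = ([] : List B).length
    simp
  | cons i ω ih =>
    obtain ⟨τ, hsub, hred, hprod⟩ := ih
    rcases cs.length_simple_mul (π τ) i with hup | hdown
    · have hred' : ℓ (π τ) = τ.length := hred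
      refine ⟨i :: τ, hsub.cons₂ i, ?_, ?_⟩
      · show ℓ (π (i :: τ)) = (i :: τ).length
        rw [wordProd_cons, hup, hred', List.length_cons]
      · rw [wordProd_cons, wordProd_cons, hprod]
    · have hlt : ℓ (s i * π τ) < ℓ (π τ) := by omega
      obtain ⟨σ, hσsub, hσlen, hσprod⟩ := strong_exchange_left cs (cs.isReflection_simple i) hlt
      refine ⟨σ, (hσsub.trans hsub).trans (List.sublist_cons_self i ω), ?_, ?_⟩
      · show ℓ (π σ) = σ.length
        have hred' : ℓ (π τ) = τ.length := hred
        rw [hσprod]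
        omega
      · rw [hσprod, hprod, wordProd_cons]

end Exchange

section Chain
variable [Group W] {M : CoxeterMatrix B} (cs : CoxeterSystem M W)

local prefix:100 "s" => cs.simple
local prefix:100 "π" => cs.wordProd
local prefix:100 "ℓ" => cs.length

/-- Covering-type relation: `y` is obtained from `x` by multiplying by a reflection,
increasing the length. -/
def crel (x y : W) : Prop := (∃ t, cs.IsReflection t ∧ y = x * t) ∧ ℓ x < ℓ y

/-- The chain (Bruhat) preorder. -/
def chain : W → W → Prop := Relation.ReflTransGen (crel cs)

theorem chain_subword {u w : W} (h : chain cs u w) :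
    ∀ ω : List B, π ω = w → ∃ τ, τ.Sublist ω ∧ π τ = u := by
  induction h with
  | refl => exact fun ω hω => ⟨ω, List.Sublist.refl ω, hω⟩
  | @tail b c _ hr ih =>
    intro ω hω
    obtain ⟨⟨t, ht, hbc⟩, hlt⟩ := hr
    have hword : ℓ (π ω * t) < ℓ (π ω) := by
      rw [hω]
      have : c * t = b := by rw [hbc, mul_assoc, ht.mul_self, mul_one]
      rw [this]
      rwa [hbc] at hlt ⊢
    obtain ⟨j, hj, hje⟩ := strong_exchange_right cs ht hword
    have hjb : π (ω.eraseIdx j) = b := by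
      rw [hje, hω, hbc, mul_assoc, ht.mul_self, mul_one]
    obtain ⟨τ, hτ, hπ⟩ := ih (ω.eraseIdx j) hjb
    exact ⟨τ, hτ.trans (List.eraseIdx_sublist ω j), hπ⟩

theorem grand (n : ℕ) :
    (∀ (x y : W) (i : B), chain cs x y → ℓ x < ℓ (x * s i) → ℓ y < ℓ (y * s i) →
      ℓ (y * s i) ≤ n → chain cs (x * s i) (y * s i)) ∧
    (∀ (x y : W) (i : B), chain cs x y → ℓ x < ℓ (x * s i) → ℓ (y * s i) < ℓ y →
      ℓ y ≤ n → chain cs (x * s i) y) ∧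
    (∀ ω τ : List B, cs.IsReduced ω → τ.Sublist ω → ω.length ≤ n →
      chain cs (π τ) (π ω)) := by
  induction n using Nat.strong_induction_on with
  | _ n ih =>
  have z1 : ∀ (x y : W) (i : B), chain cs x y → ℓ x < ℓ (x * s i) → ℓ y < ℓ (y * s i) →
      ℓ (y * s i) ≤ n → chain cs (x * s i) (y * s i) := by
    intro x y i hc hx hy hn
    rcases Relation.ReflTransGen.cases_tail hc with heq | ⟨v, hxv, hvy⟩
    · subst heq; exact Relation.ReflTransGen.refl
    obtain ⟨⟨t, ht, hyv⟩, hlv⟩ := hvy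
    have hvne := cs.length_mul_simple_ne v i
    rcases Nat.lt_or_ge (ℓ v) (ℓ (v * s i)) with hvup | hvdown
    · have m1 : ℓ (v * s i) < n := by
        rcases cs.length_mul_simple v i with h' | h' <;> omega
      obtain ⟨z1', _, _⟩ := ih (ℓ (v * s i)) m1
      have hchain1 := z1' x v i hxv hx hvup (le_refl _)
      refine hchain1.tail ⟨⟨s i * t * s i, ?_, ?_⟩, ?_⟩
      · have := ht.conj (s i); rwa [inv_simple] at this
      · rw [hyv]
        simp [← mul_assoc, cs.simple_mul_simple_cancel_right]
      · rcases cs.length_mul_simple v i with h' | h' <;> omega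
    · have hvdown' : ℓ (v * s i) < ℓ v := Nat.lt_of_le_of_ne hvdown (Ne.symm hvne).symm
      have m2 : ℓ v < n := by omega
      obtain ⟨_, z2', _⟩ := ih (ℓ v) m2
      have hchain1 := z2' x v i hxv hx hvdown' (le_refl _)
      exact (hchain1.tail ⟨⟨t, ht, hyv⟩, hlv⟩).tail ⟨⟨s i, cs.isReflection_simple i, rfl⟩, hy⟩
  have z2 : ∀ (x y : W) (i : B), chain cs x y → ℓ x < ℓ (x * s i) → ℓ (y * s i) < ℓ y →
      ℓ y ≤ n → chain cs (x * s i) y := by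
    intro x y i hc hx hy hn
    rcases Relation.ReflTransGen.cases_tail hc with heq | ⟨v, hxv, hvy⟩
    · subst heq; omega
    obtain ⟨⟨t, ht, hyv⟩, hlv⟩ := hvy
    rcases Nat.lt_or_ge (ℓ v) (ℓ (v * s i)) with hvup | hvdown
    · have hchain1 := z1 x v i hxv hx hvup (by
        rcases cs.length_mul_simple v i with h' | h' <;> omega)
      obtain ⟨ξ, hξred, hξ⟩ := cs.exists_reduced_word' (y * s i)
      have hξlen : ξ.length = ℓ (y * s i) := by
        have h' : ℓ (π ξ) = ξ.length := hξred
        rw [← hξ] at h'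
        omega
      have hζprod : π (ξ ++ [i]) = y := by
        rw [wordProd_append, wordProd_singleton, ← hξ, mul_assoc, cs.simple_mul_simple_self,
          mul_one]
      have hyt : y * t = v := by rw [hyv, mul_assoc, ht.mul_self, mul_one]
      have hltv : ℓ (π (ξ ++ [i]) * t) < ℓ (π (ξ ++ [i])) := by
        rw [hζprod, hyt]; exact hlv
      obtain ⟨j, hj, hje⟩ := strong_exchange_right cs ht hltv
      rw [hζprod, hyt] at hje
      have hjlen : j < ξ.length + 1 := by simpa using hj
      rcases Nat.lt_or_ge j ξ.length with hjlt | hjge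
      · rw [List.eraseIdx_append_of_lt_length hjlt] at hje
        rw [wordProd_append, wordProd_singleton] at hje
        have hvs : v * s i = π (ξ.eraseIdx j) := by
          rw [← hje, mul_assoc, cs.simple_mul_simple_self, mul_one]
        have hξn : ξ.length < n := by omega
        obtain ⟨_, _, ii'⟩ := ih ξ.length hξn
        have hchain2 : chain cs (v * s i) (y * s i) := by
          have hcc := ii' ξ (ξ.eraseIdx j) hξred (List.eraseIdx_sublist ξ j) (le_refl _)
          rwa [← hvs, ← hξ] at hcc
        have hstep : crel cs (y * s i) y :=
          ⟨⟨s i, cs.isReflection_simple i, by rw [mul_assoc, cs.simple_mul_simple_self, mul_one]⟩,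
            hy⟩
        exact (hchain1.trans hchain2).tail hstep
      · rw [List.eraseIdx_append_of_length_le hjge] at hje
        have hj0 : j - ξ.length = 0 := by omega
        rw [hj0] at hje
        simp only [List.eraseIdx_cons_zero, List.append_nil] at hje
        have hvy' : v * s i = y := by
          rw [← hje, ← hξ, mul_assoc, cs.simple_mul_simple_self, mul_one]
        rwa [hvy'] at hchain1
    · have hvdown' : ℓ (v * s i) < ℓ v :=
        Nat.lt_of_le_of_ne hvdown (Ne.symm (cs.length_mul_simple_ne v i)).symm
      obtain ⟨_, z2', _⟩ := ih (ℓ v) (by omega)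
      exact (z2' x v i hxv hx hvdown' (le_refl _)).tail ⟨⟨t, ht, hyv⟩, hlv⟩
  have ii : ∀ ω τ : List B, cs.IsReduced ω → τ.Sublist ω → ω.length ≤ n →
      chain cs (π τ) (π ω) := by
    intro ω τ hred hsub hn
    obtain ⟨τ', hτ'sub, hτ'red, hτ'prod⟩ := exists_reduced_sublist cs τ
    rw [← hτ'prod]
    have hsub' : τ'.Sublist ω := hτ'sub.trans hsub
    rcases List.eq_nil_or_concat ω with rfl | ⟨ω₁, j, rfl⟩
    · rw [List.sublist_nil.mp hsub']
      exact Relation.ReflTransGen.refl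
    · rw [List.concat_eq_append] at hsub' hn hred ⊢
      have hω₁red : cs.IsReduced ω₁ := by
        have h' := hred.take ω₁.length
        rwa [List.take_left] at h'
      have hωlen : ℓ (π (ω₁ ++ [j])) = ω₁.length + 1 := by
        have h' : ℓ (π (ω₁ ++ [j])) = (ω₁ ++ [j]).length := hred
        simpa using h'
      have hω₁len : ℓ (π ω₁) = ω₁.length := hω₁red
      rcases List.sublist_append_iff.mp hsub' with ⟨τ₁, τ₂, rfl, hτ₁, hτ₂⟩
      have hlen' : ω₁.length < n := by
        have : (ω₁ ++ [j]).length = ω₁.length + 1 := by simp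
        omega
      obtain ⟨_, _, ii'⟩ := ih ω₁.length hlen'
      rcases List.sublist_singleton.mp hτ₂ with rfl | rfl
      · rw [List.append_nil]
        have hc := ii' ω₁ τ₁ hω₁red hτ₁ (le_refl _)
        refine hc.tail ⟨⟨s j, cs.isReflection_simple j, ?_⟩, ?_⟩
        · rw [wordProd_append, wordProd_singleton]
        · omega
      · have hc := ii' ω₁ τ₁ hω₁red hτ₁ (le_refl _)
        have hτ₁red : cs.IsReduced τ₁ := by
          have h' := hτ'red.take τ₁.length
          rwa [List.take_left] at h'
        have hτlen : ℓ (π (τ₁ ++ [j])) = τ₁.length + 1 := by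
          have h' : ℓ (π (τ₁ ++ [j])) = (τ₁ ++ [j]).length := hτ'red
          simpa using h'
      
        have happ : π (τ₁ ++ [j]) = π τ₁ * s j := by
          rw [wordProd_append, wordProd_singleton]
        have happω : π (ω₁ ++ [j]) = π ω₁ * s j := by
          rw [wordProd_append, wordProd_singleton]
        rw [happ, happω]
        refine z1 (π τ₁) (π ω₁) j hc ?_ ?_ ?_
        · rw [← happ, hτlen]
          have : ℓ (π τ₁) = τ₁.length := hτ₁red
          omega
        · rw [← happω]; omega
        · rw [← happω]; omega
  exact ⟨z1, z2, ii⟩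

theorem chain_of_sublist {ω τ : List B} (hred : cs.IsReduced ω) (hsub : τ.Sublist ω) :
    chain cs (π τ) (π ω) :=
  (grand cs ω.length).2.2 ω τ hred hsub (le_refl _)

/-- The subword property: a Bruhat-smaller element appears as a reduced subword of *every*
reduced word. -/
theorem bruhat_transfer {u w : W} (h : BruhatLE cs u w) {ω' : List B}
    (hred' : cs.IsReduced ω') (hw : π ω' = w) :
    ∃ τ' : List B, τ'.Sublist ω' ∧ cs.IsReduced τ' ∧ π τ' = u := by
  obtain ⟨ω, hred, hπ, τ, hsub, hτred, hτπ⟩ := h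
  have hchain : chain cs u w := by
    have hcc := chain_of_sublist cs hred hsub
    rwa [hτπ, hπ] at hcc
  obtain ⟨τ₀, hτ₀sub, hτ₀π⟩ := chain_subword cs hchain ω' hw
  obtain ⟨τ₁, h1, h2, h3⟩ := exists_reduced_sublist cs τ₀
  exact ⟨τ₁, h1.trans hτ₀sub, h2, by rw [h3, hτ₀π]⟩

theorem bruhat_length_le {u w : W} (h : BruhatLE cs u w) : ℓ u ≤ ℓ w := by
  obtain ⟨ω, hred, hπ, τ, hsub, hτred, hτπ⟩ := h
  have h1 : ℓ u = τ.length := by rw [← hτπ]; exact hτred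
  have h2 : ℓ w = ω.length := by rw [← hπ]; exact hred
  rw [h1, h2]
  exact hsub.length_le

theorem bruhat_antisymm {u w : W} (h1 : BruhatLE cs u w) (h2 : BruhatLE cs w u) : u = w := by
  obtain ⟨ω, hred, hπ, τ, hsub, hτred, hτπ⟩ := h1
  have hlen : ℓ u = ℓ w := le_antisymm (bruhat_length_le cs ⟨ω, hred, hπ, τ, hsub, hτred, hτπ⟩)
    (bruhat_length_le cs h2)
  have hτlen : τ.length = ω.length := by
    have e1 : ℓ u = τ.length := by rw [← hτπ]; exact hτred
    have e2 : ℓ w = ω.length := by rw [← hπ]; exact hred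
    omega
  rw [← hτπ, ← hπ, hsub.eq_of_length hτlen]

theorem demazure_decomp {w w' m x : W} (h : IsDemazureProd cs w w' m)
    (hx : BruhatLE cs x m) :
    ∃ a b : W, BruhatLE cs a w ∧ BruhatLE cs b w' ∧ x = a * b := by
  obtain ⟨u, u', hu, hu', rfl⟩ := h.1
  obtain ⟨α, hαred, hαπ, α₀, hα₀sub, hα₀red, hα₀π⟩ := hu
  obtain ⟨β, hβred, hβπ, β₀, hβ₀sub, hβ₀red, hβ₀π⟩ := hu'
  obtain ⟨γ, hγsub, hγred, hγπ⟩ := exists_reduced_sublist cs (α₀ ++ β₀)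
  have hγπ' : π γ = u * u' := by rw [hγπ, wordProd_append, hα₀π, hβ₀π]
  obtain ⟨τ, hτsub, hτred, hτπ⟩ := bruhat_transfer cs hx hγred hγπ'
  rcases List.sublist_append_iff.mp (hτsub.trans hγsub) with ⟨τ₁, τ₂, rfl, h1, h2⟩
  obtain ⟨σ₁, hσ₁sub, hσ₁red, hσ₁π⟩ := exists_reduced_sublist cs τ₁
  obtain ⟨σ₂, hσ₂sub, hσ₂red, hσ₂π⟩ := exists_reduced_sublist cs τ₂
  refine ⟨π τ₁, π τ₂, ?_, ?_, ?_⟩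
  · exact ⟨α, hαred, hαπ, σ₁, (hσ₁sub.trans h1).trans hα₀sub, hσ₁red, hσ₁π⟩
  · exact ⟨β, hβred, hβπ, σ₂, (hσ₂sub.trans h2).trans hβ₀sub, hσ₂red, hσ₂π⟩
  · rw [← hτπ, wordProd_append]

end Chain

end

theorem demazure_product_assoc [Group W] {M : CoxeterMatrix B}
    (cs : CoxeterSystem M W) (w w' w'' d₁ d₂ d₃ d₄ : W)
    (h₁ : IsDemazureProd cs w w' d₁)
    (h₂ : IsDemazureProd cs d₁ w'' d₂)
    (h₃ : IsDemazureProd cs w' w'' d₃)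
    (h₄ : IsDemazureProd cs w d₃ d₄) :
    d₂ = d₄ := by
  obtain ⟨a, b, ha, hb, hd2⟩ := h₂.1
  obtain ⟨a₁, a₂, ha₁, ha₂, haeq⟩ := demazure_decomp cs h₁ ha
  have h5 : BruhatLE cs (a₂ * b) d₃ := h₃.2 a₂ b ha₂ hb
  have h6 : BruhatLE cs (a₁ * (a₂ * b)) d₄ := h₄.2 a₁ (a₂ * b) ha₁ h5
  have hd24 : BruhatLE cs d₂ d₄ := by
    rw [hd2, haeq, mul_assoc]
    exact h6
  obtain ⟨p, q, hp, hq, hd4⟩ := h₄.1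
  obtain ⟨q₁, q₂, hq₁, hq₂, hqeq⟩ := demazure_decomp cs h₃ hq
  have h7 : BruhatLE cs (p * q₁) d₁ := h₁.2 p q₁ hp hq₁
  have h8 : BruhatLE cs ((p * q₁) * q₂) d₂ := h₂.2 (p * q₁) q₂ h7 hq₂
  have hd42 : BruhatLE cs d₄ d₂ := by
    rw [hd4, hqeq, ← mul_assoc]
    exact h8
  exact bruhat_antisymm cs hd24 hd42
end

section
/- Let (W,S) be a Coxeter system and let w, y ∈ W. Assume that every reflection t ∈ W with ℓ(t y) < ℓ(y) satisfies ℓ(w t) < ℓ(w). Then ℓ(w y) = ℓ(w) − ℓ(y). (When W is the Weyl group of a root system, the hypothesis is equivalent to: w(α) is a negative root for every positive root α such that y⁻¹(α) is a negative root.) -/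
/-!
Let (W,S) be a Coxeter system and w, y ∈ W. Assume that every reflection t with
ℓ(t y) < ℓ(y) satisfies ℓ(w t) < ℓ(w). Then ℓ(w y) = ℓ(w) − ℓ(y)
(stated additively as ℓ(w) = ℓ(w y) + ℓ(y)).
-/

open CoxeterSystem List

namespace CoxAux

attribute [local instance] Classical.propDecidable

variable {W : Type*} [Group W]


variable {W : Type*} [Group W]

/-- Generic dihedral commuting lemma: `b * (a*b)^n = (b*a)^n * b`. -/
theorem comm1 (a b : W) (n : ℕ) : b * (a * b) ^ n = (b * a) ^ n * b := by
  induction n with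
  | zero => simp
  | succ n ih =>
    rw [pow_succ', pow_succ']
    simp only [mul_assoc] at ih ⊢
    rw [ih]

theorem cancel1 (a b : W) (ha : a * a = 1) (hb : b * b = 1) (n : ℕ) :
    (b * a) ^ n * (a * b) ^ n = 1 := by
  have ha' : ∀ x : W, a * (a * x) = x := fun x => by rw [← mul_assoc, ha, one_mul]
  have hb' : ∀ x : W, b * (b * x) = x := fun x => by rw [← mul_assoc, hb, one_mul]
  induction n with
  | zero => simp
  | succ n ih =>
    rw [pow_succ, pow_succ']
    simp only [mul_assoc]
    rw [ha', hb']
    simpa [mul_assoc] using ih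

theorem cancel2 (a b : W) (ha : a * a = 1) (hb : b * b = 1) (n : ℕ) :
    (a * b) ^ n * (b * a) ^ n = 1 :=
  cancel1 b a hb ha n

theorem key0 (a b : W) (ha : a * a = 1) (hb : b * b = 1) (n : ℕ) :
    (b * a) ^ n * (b * (b * a) ^ n) = b := by
  rw [← mul_assoc]
  have h1 : (b * a) ^ n * b = b * (a * b) ^ n := (comm1 a b n).symm
  rw [h1, mul_assoc, cancel2 a b ha hb n, mul_one]

theorem key1 (a b : W) (ha : a * a = 1) (hb : b * b = 1) (n : ℕ) :
    (a * b) ^ n * ((b * a) ^ (2 * n) * b) * (b * a) ^ n = b := by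
  have h2n : (b * a) ^ (2 * n) = (b * a) ^ n * (b * a) ^ n := by
    rw [two_mul, pow_add]
  rw [h2n]
  simp only [mul_assoc]
  rw [key0 a b ha hb n, ← mul_assoc, cancel2 a b ha hb n, one_mul]

theorem key2 (a b : W) (ha : a * a = 1) (hb : b * b = 1) (n : ℕ) :
    (a * b) ^ n * ((b * a) ^ (2 * n + 1) * b) * (b * a) ^ n = b * a * b := by
  have h2n : (b * a) ^ (2 * n + 1) = (b * a) ^ n * (b * a * (b * a) ^ n) := by
    rw [show 2 * n + 1 = n + (1 + n) by omega, pow_add, pow_add, pow_one]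
  rw [h2n]
  simp only [mul_assoc]
  rw [key0 a b ha hb n, ← mul_assoc, cancel2 a b ha hb n, one_mul]


variable {B : Type*} {M : CoxeterMatrix B} (cs : CoxeterSystem M W)

/-- The sign-flipping conjugation map attached to a simple reflection. -/
noncomputable def sigmaFun (i : B) : W × ℤˣ → W × ℤˣ :=
  fun x => (cs.simple i * x.1 * cs.simple i, if x.1 = cs.simple i then -x.2 else x.2)

theorem sigmaFun_invol (i : B) : Function.Involutive (sigmaFun cs i) := by
  rintro ⟨w, ε⟩
  simp only [sigmaFun]
  refine Prod.ext ?_ ?_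
  · simp [mul_assoc, cs.simple_mul_simple_cancel_left, cs.simple_mul_simple_cancel_right]
  · by_cases hw : w = cs.simple i
    · subst hw
      simp [cs.simple_mul_simple_self, cs.simple_mul_simple_cancel_right]
    · have h2 : cs.simple i * w * cs.simple i ≠ cs.simple i := by
        intro hc
        apply hw
        have := congrArg (fun z => cs.simple i * z * cs.simple i) hc
        simpa [mul_assoc, cs.simple_mul_simple_cancel_left,
          cs.simple_mul_simple_cancel_right] using this
      simp [hw, h2]

/-- The sign-flipping conjugation permutation attached to a simple reflection. -/
noncomputable def sigmaPerm (i : B) : Equiv.Perm (W × ℤˣ) :=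
  Function.Involutive.toPerm _ (sigmaFun_invol cs i)

theorem sigmaPerm_apply (i : B) (x : W × ℤˣ) : sigmaPerm cs i x = sigmaFun cs i x := rfl

theorem sigma_pow_apply (i j : B) (n : ℕ) (w : W) (ε : ℤˣ) :
    ((sigmaPerm cs i * sigmaPerm cs j) ^ n) (w, ε) =
      ((cs.simple i * cs.simple j) ^ n * w * (cs.simple j * cs.simple i) ^ n,
        ε * ∏ k ∈ Finset.range (2 * n),
          (if w = (cs.simple j * cs.simple i) ^ k * cs.simple j then (-1 : ℤˣ) else 1)) := by
  set a := cs.simple i with ha_def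
  set b := cs.simple j with hb_def
  have ha : a * a = 1 := cs.simple_mul_simple_self i
  have hb : b * b = 1 := cs.simple_mul_simple_self j
  induction n with
  | zero => simp
  | succ n ih =>
    rw [pow_succ' (sigmaPerm cs i * sigmaPerm cs j) n, Equiv.Perm.mul_apply, ih]
    rw [Equiv.Perm.mul_apply, sigmaPerm_apply, sigmaPerm_apply]
    simp only [sigmaFun]
    set c := (a * b) ^ n * w * (b * a) ^ n with hc_def
    have cond1 : (c = b) ↔ (w = (b * a) ^ (2 * n) * b) := by
      constructor
      · intro hcb
        have : (a * b) ^ n * w * (b * a) ^ n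
            = (a * b) ^ n * ((b * a) ^ (2 * n) * b) * (b * a) ^ n := by
          rw [← hc_def, hcb, key1 a b ha hb n]
        exact mul_left_cancel (mul_right_cancel this)
      · intro hw
        rw [hc_def, hw]
        exact key1 a b ha hb n
    have cond2 : (b * c * b = a) ↔ (w = (b * a) ^ (2 * n + 1) * b) := by
      have step : (b * c * b = a) ↔ (c = b * a * b) := by
        constructor
        · intro hcb
          have := congrArg (fun z => b * z * b) hcb
          calc c = b * (b * c * b) * b := by
                rw [show b * (b * c * b) * b = (b * b) * c * (b * b) by
                  simp only [mul_assoc], hb]; simp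
            _ = b * a * b := by rw [hcb]
        · intro hcb
          rw [hcb, show b * (b * a * b) * b = (b * b) * a * (b * b) by
            simp only [mul_assoc], hb]; simp
      rw [step]
      constructor
      · intro hcb
        have : (a * b) ^ n * w * (b * a) ^ n
            = (a * b) ^ n * ((b * a) ^ (2 * n + 1) * b) * (b * a) ^ n := by
          rw [← hc_def, hcb, key2 a b ha hb n]
        exact mul_left_cancel (mul_right_cancel this)
      · intro hw
        rw [hc_def, hw]
        exact key2 a b ha hb n
    refine Prod.ext ?_ ?_
    · -- first components
      show a * (b * c * b) * a = (a * b) ^ (n + 1) * w * (b * a) ^ (n + 1)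
      rw [hc_def, pow_succ' (a*b), pow_succ (b*a)]
      simp only [mul_assoc]
    · -- sign components
      show (if b * c * b = a then
              -(if c = b then -(ε * _) else (ε * _))
            else (if c = b then -(ε * _) else (ε * _))) = ε * _
      rw [show 2 * (n + 1) = (2 * n) + 1 + 1 by omega]
      rw [Finset.prod_range_succ, Finset.prod_range_succ]
      simp only [← cond1, ← cond2]
      by_cases h1 : c = b
      · by_cases h2 : b * c * b = a
        · simp only [if_pos h1, if_pos h2]
          simp [mul_neg_one, mul_one, neg_neg, mul_neg, neg_mul, mul_comm, mul_left_comm,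
            mul_assoc]
        · simp only [if_pos h1, if_neg h2]
          simp [mul_neg_one, mul_one, neg_neg, mul_neg, neg_mul, mul_comm, mul_left_comm,
            mul_assoc]
      · by_cases h2 : b * c * b = a
        · simp only [if_neg h1, if_pos h2]
          simp [mul_neg_one, mul_one, neg_neg, mul_neg, neg_mul, mul_comm, mul_left_comm,
            mul_assoc]
        · simp only [if_neg h1, if_neg h2]
          simp [mul_neg_one, mul_one, neg_neg, mul_neg, neg_mul, mul_comm, mul_left_comm,
            mul_assoc]


theorem sigma_liftable : M.IsLiftable (fun i => sigmaPerm cs i) := by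
  intro i j
  apply Equiv.ext
  rintro ⟨w, ε⟩
  rw [sigma_pow_apply]
  have hp : (cs.simple i * cs.simple j) ^ M i j = 1 := cs.simple_mul_simple_pow i j
  have hq : (cs.simple j * cs.simple i) ^ M i j = 1 := cs.simple_mul_simple_pow' i j
  have hsgn : (∏ k ∈ Finset.range (2 * M i j),
      (if w = (cs.simple j * cs.simple i) ^ k * cs.simple j then (-1 : ℤˣ) else 1)) = 1 := by
    rw [two_mul, Finset.prod_range_add]
    have hshift : ∀ k : ℕ,
        (if w = (cs.simple j * cs.simple i) ^ (M i j + k) * cs.simple j then (-1 : ℤˣ) else 1)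
        = (if w = (cs.simple j * cs.simple i) ^ k * cs.simple j then (-1 : ℤˣ) else 1) := by
      intro k
      rw [pow_add, hq, one_mul]
    rw [Finset.prod_congr rfl (fun k _ => hshift k)]
    exact Int.units_mul_self _
  rw [hp, hq, hsgn]
  simp [Equiv.Perm.one_apply]

/-- The reflection-sign representation of the Coxeter group. -/
noncomputable def phi : W →* Equiv.Perm (W × ℤˣ) :=
  cs.lift ⟨fun i => sigmaPerm cs i, sigma_liftable cs⟩

theorem phi_simple (i : B) : phi cs (cs.simple i) = sigmaPerm cs i :=
  cs.lift_apply_simple (sigma_liftable cs) i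

/-- The sign of a list of reflections at `w`. -/
noncomputable def risSign (w : W) : List W → ℤˣ
  | [] => 1
  | t :: l => (if w = t then (-1 : ℤˣ) else 1) * risSign w l

theorem risSign_eq_one_of_not_mem (w : W) (l : List W) (h : w ∉ l) : risSign w l = 1 := by
  induction l with
  | nil => rfl
  | cons t l ih =>
    rw [risSign]
    rw [if_neg (by intro hc; exact h (hc ▸ List.mem_cons_self (a := t) (l := l))),
      ih (fun hc => h (List.mem_cons_of_mem t hc)), one_mul]

theorem phi_wordProd (ω : List B) (w : W) (ε : ℤˣ) :
    phi cs (cs.wordProd ω) (w, ε) =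
      (cs.wordProd ω * w * (cs.wordProd ω)⁻¹, ε * risSign w (cs.rightInvSeq ω)) := by
  induction ω generalizing ε with
  | nil => simp [risSign, rightInvSeq]
  | cons i ω ih =>
    rw [cs.wordProd_cons, map_mul, Equiv.Perm.mul_apply, ih, phi_simple, sigmaPerm_apply]
    simp only [sigmaFun]
    have hris : cs.rightInvSeq (i :: ω)
        = ((cs.wordProd ω)⁻¹ * cs.simple i * cs.wordProd ω) :: cs.rightInvSeq ω := rfl
    rw [hris, risSign]
    refine Prod.ext ?_ ?_
    · show cs.simple i * (cs.wordProd ω * w * (cs.wordProd ω)⁻¹) * cs.simple i = _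
      simp [mul_assoc]
    · show (if cs.wordProd ω * w * (cs.wordProd ω)⁻¹ = cs.simple i then
          -(ε * risSign w (cs.rightInvSeq ω)) else ε * risSign w (cs.rightInvSeq ω)) = _
      have hcond : (cs.wordProd ω * w * (cs.wordProd ω)⁻¹ = cs.simple i)
          ↔ (w = (cs.wordProd ω)⁻¹ * cs.simple i * cs.wordProd ω) := by
        constructor
        · intro hc
          rw [← hc]
          group
        · intro hc
          rw [hc]
          group
      by_cases hc : w = (cs.wordProd ω)⁻¹ * cs.simple i * cs.wordProd ω
      · rw [if_pos (hcond.mpr hc), if_pos hc]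
        rw [neg_one_mul, mul_neg]
      · rw [if_neg (fun hx => hc (hcond.mp hx)), if_neg hc, one_mul]

/-- The sign of the reflection representation. -/
noncomputable def eta (u w : W) : ℤˣ := (phi cs u (w, 1)).2

theorem phi_apply (u w : W) (ε : ℤˣ) : phi cs u (w, ε) = (u * w * u⁻¹, ε * eta cs u w) := by
  obtain ⟨ω, rfl⟩ := cs.wordProd_surjective u
  rw [phi_wordProd, eta, phi_wordProd, one_mul]

theorem eta_wordProd (ω : List B) (w : W) :
    eta cs (cs.wordProd ω) w = risSign w (cs.rightInvSeq ω) := by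
  rw [eta, phi_wordProd, one_mul]

theorem eta_mul (u v w : W) : eta cs (u * v) w = eta cs v w * eta cs u (v * w * v⁻¹) := by
  have h1 : phi cs (u * v) (w, 1) = phi cs u (phi cs v (w, 1)) := by
    rw [map_mul, Equiv.Perm.mul_apply]
  rw [phi_apply, phi_apply, phi_apply, one_mul, one_mul] at h1
  exact congrArg Prod.snd h1

theorem eta_simple (i : B) (w : W) :
    eta cs (cs.simple i) w = if w = cs.simple i then -1 else 1 := by
  rw [eta, phi_simple, sigmaPerm_apply]
  show (if w = cs.simple i then -(1 : ℤˣ) else 1) = _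
  by_cases hw : w = cs.simple i <;> simp [hw]

theorem eta_one (w : W) : eta cs 1 w = 1 := by
  rw [eta, map_one]
  rfl

theorem eta_refl_self {t : W} (ht : cs.IsReflection t) : eta cs t t = -1 := by
  obtain ⟨z, i, rfl⟩ := ht
  set t := z * cs.simple i * z⁻¹ with ht_def
  have h1 : eta cs (z * z⁻¹) t = eta cs z⁻¹ t * eta cs z (cs.simple i) := by
    rw [eta_mul]
    congr 1
    congr 1
    rw [ht_def]
    group
  rw [mul_inv_cancel, eta_one] at h1
  have h2 : t = (z * cs.simple i) * z⁻¹ := by rw [ht_def]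
  rw [h2, eta_mul]
  have h3 : z⁻¹ * t * z⁻¹⁻¹ = cs.simple i := by rw [ht_def]; group
  rw [h3, eta_mul]
  have h4 : cs.simple i * cs.simple i * (cs.simple i)⁻¹ = cs.simple i := by group
  rw [h4, eta_simple, if_pos rfl]
  calc eta cs z⁻¹ t * (-1 * eta cs z (cs.simple i))
      = -(eta cs z⁻¹ t * eta cs z (cs.simple i)) := by rw [neg_one_mul, mul_neg]
    _ = -1 := by rw [← h1]

theorem length_lt_of_eta {u t : W} (ht : cs.IsReflection t) (hu : eta cs u t = -1) :
    cs.length (u * t) < cs.length u := by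
  obtain ⟨ω, hred, rfl⟩ := cs.exists_reduced_word' u
  rw [eta_wordProd] at hu
  have hmem : t ∈ cs.rightInvSeq ω := by
    by_contra hmem
    rw [risSign_eq_one_of_not_mem _ _ hmem] at hu
    exact absurd hu (by decide)
  exact (cs.isRightInversion_of_mem_rightInvSeq hred hmem).2

theorem eta_of_length_lt {u t : W} (ht : cs.IsReflection t)
    (hu : cs.length (u * t) < cs.length u) : eta cs u t = -1 := by
  have hu' : u = (u * t) * t := by rw [mul_assoc, ht.mul_self, mul_one]
  have h1 : eta cs ((u * t) * t) t = eta cs t t * eta cs (u * t) (t * t * t⁻¹) := eta_mul ..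
  have h2 : t * t * t⁻¹ = t := by rw [ht.mul_self, one_mul, ht.inv]
  rw [h2, eta_refl_self cs ht] at h1
  have h3 : eta cs (u * t) t = 1 := by
    rcases Int.units_eq_one_or (eta cs (u * t) t) with h | h
    · exact h
    · exfalso
      have := length_lt_of_eta cs ht h
      rw [mul_assoc, ht.mul_self, mul_one] at this
      omega
  rw [← hu', h3, mul_one] at h1
  exact h1

/-- Inversion transfer across a simple reflection. -/
theorem length_mul_simple_mul_lt {w t : W} {i : B} (ht : cs.IsReflection t)
    (hts : t ≠ cs.simple i)
    (h1 : cs.length (w * (cs.simple i * t * cs.simple i)) < cs.length w) :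
    cs.length (w * cs.simple i * t) < cs.length (w * cs.simple i) := by
  have hconj : cs.IsReflection (cs.simple i * t * cs.simple i) := by
    have := ht.conj (cs.simple i)
    rwa [cs.inv_simple] at this
  have h2 : eta cs w (cs.simple i * t * cs.simple i) = -1 := eta_of_length_lt cs hconj h1
  have h3 : eta cs (w * cs.simple i) t = -1 := by
    rw [eta_mul, eta_simple, if_neg hts, one_mul, cs.inv_simple, h2]
  exact length_lt_of_eta cs ht h3

end CoxAux

theorem main_aux {B : Type*} {W : Type*} [Group W] {M : CoxeterMatrix B}
    (cs : CoxeterSystem M W) :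
    ∀ (n : ℕ) (w y : W), cs.length y = n →
      (∀ t : W, cs.IsReflection t →
        cs.length (t * y) < cs.length y → cs.length (w * t) < cs.length w) →
      cs.length w = cs.length (w * y) + cs.length y := by
  intro n
  induction n with
  | zero =>
    intro w y hy _
    rw [cs.length_eq_zero_iff] at hy
    subst hy
    simp
  | succ n ih =>
    intro w y hy h
    have hy1 : y ≠ 1 := by
      intro hc
      rw [hc, cs.length_one] at hy
      omega
    obtain ⟨i, hdes⟩ := cs.exists_leftDescent_of_ne_one hy1
    have hdes' : cs.length (cs.simple i * y) + 1 = cs.length y := cs.isLeftDescent_iff.mp hdes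
    have hy' : cs.length (cs.simple i * y) = n := by omega
    have hws : cs.length (w * cs.simple i) < cs.length w :=
      h (cs.simple i) (cs.isReflection_simple i) hdes
    have hws' : cs.length (w * cs.simple i) + 1 = cs.length w := cs.isRightDescent_iff.mp hws
    have h' : ∀ t : W, cs.IsReflection t →
        cs.length (t * (cs.simple i * y)) < cs.length (cs.simple i * y) →
        cs.length (w * cs.simple i * t) < cs.length (w * cs.simple i) := by
      intro t ht hty
      have htne : t ≠ cs.simple i := by
        rintro rfl
        rw [cs.simple_mul_simple_cancel_left] at hty
        omega
      have h1 : cs.length ((cs.simple i * t * cs.simple i) * y) < cs.length y := by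
        have e1 : (cs.simple i * t * cs.simple i) * y = cs.simple i * (t * (cs.simple i * y)) := by
          group
        rw [e1]
        have b1 : cs.length (cs.simple i * (t * (cs.simple i * y)))
            ≤ cs.length (t * (cs.simple i * y)) + 1 := by
          have := cs.length_mul_le (cs.simple i) (t * (cs.simple i * y))
          rwa [cs.length_simple, add_comm] at this
        omega
      have h2 := h _ (by
        have := ht.conj (cs.simple i)
        rwa [cs.inv_simple] at this) h1
      exact CoxAux.length_mul_simple_mul_lt cs ht htne h2
    have hres := ih (w * cs.simple i) (cs.simple i * y) hy' h'
    rw [mul_assoc, cs.simple_mul_simple_cancel_left] at hres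
    omega

theorem length_mul_eq_length_sub_length {B : Type*} {W : Type*} [Group W]
    {M : CoxeterMatrix B} (cs : CoxeterSystem M W) (w y : W)
    (h : ∀ t : W, cs.IsReflection t →
      cs.length (t * y) < cs.length y → cs.length (w * t) < cs.length w) :
    cs.length w = cs.length (w * y) + cs.length y :=
  main_aux cs (cs.length y) w y rfl h
end

section
/- Let (W,S) be a finite Coxeter system, let c ∈ W be a Coxeter element, and suppose c = v₁ v₂ with v₁, v₂ ∈ W and ℓ(c) = ℓ(v₁) + ℓ(v₂). Then v₂ v₁ is also a Coxeter element of W. -/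
/-!
Let (W,S) be a finite Coxeter system, let c ∈ W be a Coxeter element, and suppose
c = v₁ v₂ with ℓ(c) = ℓ(v₁) + ℓ(v₂). Then v₂ v₁ is also a Coxeter element of W.
-/

open CoxeterSystem

variable {B : Type*} {W : Type*}

/-- A Coxeter element of a Coxeter group: a product of the simple reflections,
each occurring exactly once, in some order. -/
def IsCoxeterElement [Group W] {M : CoxeterMatrix B} (cs : CoxeterSystem M W)
    (c : W) : Prop :=
  ∃ ω : List B, ω.Nodup ∧ (∀ i : B, i ∈ ω) ∧ cs.wordProd ω = c

namespace CoxAux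


variable {B : Type*} {W : Type*} [Group W] {M : CoxeterMatrix B} (cs : CoxeterSystem M W)

section GeomRep

variable [Fintype B] [DecidableEq B] (M)

/-- entries of the standard bilinear form -/
noncomputable def kf (x y : B) : ℝ := - Real.cos (Real.pi / M x y)

/-- the linear form v ↦ ⟨αₓ, v⟩ -/
noncomputable def bL (x : B) : (B → ℝ) →ₗ[ℝ] ℝ :=
  ∑ y : B, kf M x y • (LinearMap.proj y)

lemma bL_apply (x : B) (v : B → ℝ) : bL M x v = ∑ y : B, kf M x y * v y := by
  simp [bL]

lemma bL_single (x y : B) : bL M x (Pi.single y 1) = kf M x y := by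
  simp [bL_apply, Pi.single_apply, mul_ite, Finset.sum_ite_eq']

lemma kf_self (x : B) : kf M x x = 1 := by
  simp [kf, M.diagonal x, Real.cos_pi]

lemma kf_symm (x y : B) : kf M x y = kf M y x := by
  rw [kf, kf, M.symmetric]

/-- the reflection in αₓ -/
noncomputable def reflE (x : B) : Module.End ℝ (B → ℝ) :=
  LinearMap.id - ((2:ℝ) • bL M x).smulRight ((Pi.single x 1 : B → ℝ))

lemma reflE_apply (x : B) (v : B → ℝ) :
    reflE M x v = v - (2 * bL M x v) • (Pi.single x 1 : B → ℝ) := by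
  simp [reflE, smul_smul]

lemma reflE_single_self (x : B) : reflE M x (Pi.single x 1) = -(Pi.single x 1 : B → ℝ) := by
  rw [reflE_apply, bL_single, kf_self]
  module

lemma reflE_single (x y : B) :
    reflE M x (Pi.single y 1) = (Pi.single y 1 : B → ℝ) - (2 * kf M x y) • (Pi.single x 1 : B → ℝ) := by
  rw [reflE_apply, bL_single]

lemma bL_reflE (x y : B) (v : B → ℝ) :
    bL M x (reflE M y v) = bL M x v - (2 * bL M y v) * kf M x y := by
  rw [reflE_apply, map_sub, map_smul, bL_single, smul_eq_mul]

lemma reflE_fix {x : B} {v : B → ℝ} (h : bL M x v = 0) : reflE M x v = v := by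
  rw [reflE_apply, h]
  module

lemma reflE_sq (x : B) : reflE M x * reflE M x = 1 := by
  apply LinearMap.ext
  intro v
  show reflE M x (reflE M x v) = v
  rw [reflE_apply M x v, reflE_apply, map_sub, map_smul, bL_single, kf_self]
  simp only [smul_eq_mul, mul_one]
  module

end GeomRep





variable {B : Type*} {W : Type*} [Group W] {M : CoxeterMatrix B} (cs : CoxeterSystem M W)

section Rank2

variable [Fintype B] [DecidableEq B] (M)

private lemma sin_rec (θ A : ℝ) :
    Real.sin (A + θ) + Real.sin (A - θ) = 2 * Real.cos θ * Real.sin A := by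
  rw [Real.sin_add, Real.sin_sub]; ring

private lemma sin_id1 (θ A : ℝ) :
    Real.sin (A + 2*θ) = 2 * Real.cos θ * Real.sin (A + θ) - Real.sin A := by
  have h := sin_rec θ (A + θ)
  have e1 : A + θ + θ = A + 2*θ := by ring
  have e2 : A + θ - θ = A := by ring
  rw [e1, e2] at h
  linarith

private lemma sin_id2 (θ A : ℝ) :
    Real.sin (A + 3*θ) = (4 * Real.cos θ ^ 2 - 1) * Real.sin (A + θ) - 2 * Real.cos θ * Real.sin A := by
  have h1 := sin_id1 θ (A + θ)
  have h2 := sin_id1 θ A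
  have e1 : A + θ + 2*θ = A + 3*θ := by ring
  have e2 : A + θ + θ = A + 2*θ := by ring
  rw [e1, e2] at h1
  rw [h1, h2]
  ring

variable {M}

lemma reflE_order_rank2 {x y : B} (hxy : x ≠ y) (hm : 2 ≤ M x y) :
    (reflE M x * reflE M y) ^ M x y = 1 := by
  set m : ℕ := M x y with hmdef
  have hm0 : (m : ℝ) ≠ 0 := by positivity
  set θ : ℝ := Real.pi / m with hθdef
  set c : ℝ := Real.cos θ with hcdef
  set sn : ℝ := Real.sin θ with hsdef
  have hθpos : 0 < θ := by
    apply div_pos Real.pi_pos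
    positivity
  have hθlt : θ < Real.pi := by
    rw [hθdef]
    apply div_lt_self Real.pi_pos
    exact_mod_cast hm
  have hs : 0 < sn := Real.sin_pos_of_pos_of_lt_pi hθpos hθlt
  have hsne : sn ≠ 0 := ne_of_gt hs
  set ex : B → ℝ := Pi.single x 1 with hex
  set ey : B → ℝ := Pi.single y 1 with hey
  set g : Module.End ℝ (B → ℝ) := reflE M x * reflE M y with hgdef
  have hkxy : kf M x y = -c := by rw [kf, hcdef, hθdef, hmdef]
  have hkyx : kf M y x = -c := by rw [kf_symm, hkxy]
  -- images of basis vectors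
  have hxex : reflE M x ex = -ex := reflE_single_self M x
  have hyey : reflE M y ey = -ey := reflE_single_self M y
  have hxey : reflE M x ey = ey + (2*c) • ex := by
    rw [hex, hey, reflE_single, hkxy]; module
  have hyex : reflE M y ex = ex + (2*c) • ey := by
    rw [hex, hey, reflE_single, hkyx]; module
  have hgex : g ex = (4*c^2-1) • ex + (2*c) • ey := by
    show reflE M x (reflE M y ex) = _
    rw [hyex, map_add, map_smul, hxex, hxey]
    module
  have hgey : g ey = (-(2*c)) • ex + (-1 : ℝ) • ey := by
    show reflE M x (reflE M y ey) = _
    rw [hyey, map_neg, hxey]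
    module
  -- the key orbit formula
  have key : ∀ t : ℕ,
      (g ^ t) ex = (Real.sin ((2*(t:ℝ)+1)*θ)/sn) • ex + (Real.sin ((2*(t:ℝ))*θ)/sn) • ey ∧
      (g ^ t) ey = (-Real.sin ((2*(t:ℝ))*θ)/sn) • ex + (-Real.sin ((2*(t:ℝ)-1)*θ)/sn) • ey := by
    intro t
    induction t with
    | zero =>
      constructor
      · show (1 : Module.End ℝ (B → ℝ)) ex = _
        norm_num
        rw [div_self hsne]
        module
      · show (1 : Module.End ℝ (B → ℝ)) ey = _
        norm_num
        rw [← hsdef, div_self hsne]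
        module
    | succ t ih =>
      obtain ⟨ihx, ihy⟩ := ih
      have hps : g ^ (t+1) = g * g ^ t := pow_succ' g t
      constructor
      · rw [hps]
        show g ((g^t) ex) = _
        rw [ihx, map_add, map_smul, map_smul, hgex, hgey]
        have c1 : (2*((t:ℕ):ℝ)+1)*θ = (2*(t:ℝ))*θ + θ := by push_cast; ring
        have c2 : (2*(((t:ℕ)+1:ℕ)):ℝ)*θ = (2*(t:ℝ))*θ + 2*θ := by push_cast; ring
        have c3 : ((2*(((t:ℕ)+1:ℕ)):ℝ)+1)*θ = (2*(t:ℝ))*θ + 3*θ := by push_cast; ring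
        push_cast
        rw [show (2*((t:ℝ)+1)+1)*θ = (2*(t:ℝ))*θ + 3*θ by ring,
            show (2*((t:ℝ)+1))*θ = (2*(t:ℝ))*θ + 2*θ by ring,
            show (2*(t:ℝ)+1)*θ = (2*(t:ℝ))*θ + θ by ring,
            sin_id2 θ ((2*(t:ℝ))*θ), sin_id1 θ ((2*(t:ℝ))*θ), ← hcdef]
        match_scalars <;> field_simp <;> ring
      · rw [hps]
        show g ((g^t) ey) = _
        rw [ihy, map_add, map_smul, map_smul, hgex, hgey]
        push_cast
        rw [show (2*((t:ℝ)+1))*θ = ((2*(t:ℝ)-1))*θ + 3*θ by ring,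
            show (2*((t:ℝ)+1)-1)*θ = ((2*(t:ℝ)-1))*θ + 2*θ by ring,
            show (2*(t:ℝ))*θ = ((2*(t:ℝ)-1))*θ + θ by ring,
            sin_id2 θ ((2*(t:ℝ)-1)*θ), sin_id1 θ ((2*(t:ℝ)-1)*θ), ← hcdef]
        match_scalars <;> field_simp <;> ring
  -- evaluation at t = m
  have evQ : Real.sin ((2*(m:ℝ))*θ) = 0 := by
    rw [show (2*(m:ℝ))*θ = 2*Real.pi by rw [hθdef]; field_simp]
    exact Real.sin_two_pi
  have evP : Real.sin ((2*(m:ℝ)+1)*θ) = sn := by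
    rw [show (2*(m:ℝ)+1)*θ = θ + 2*Real.pi by rw [hθdef]; field_simp; ring]
    rw [Real.sin_add_two_pi]
  have evS : Real.sin ((2*(m:ℝ)-1)*θ) = -sn := by
    rw [show (2*(m:ℝ)-1)*θ = 2*Real.pi - θ by rw [hθdef]; field_simp]
    rw [Real.sin_two_pi_sub]
  have hgmex : (g ^ m) ex = ex := by
    rw [(key m).1, evP, evQ, div_self hsne]
    module
  have hgmey : (g ^ m) ey = ey := by
    rw [(key m).2, evS, evQ, neg_neg, div_self hsne]
    module
  -- decompose an arbitrary vector
  apply LinearMap.ext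
  intro v
  show (g ^ m) v = v
  have hd : 1 - c^2 ≠ 0 := by
    rw [hcdef, ← Real.sin_sq]
    positivity
  set Bx : ℝ := bL M x v with hBx
  set By : ℝ := bL M y v with hBy
  set al : ℝ := (Bx + c*By)/(1-c^2) with hal
  set be : ℝ := (By + c*Bx)/(1-c^2) with hbe
  set u : B → ℝ := al • ex + be • ey with hu
  set r : B → ℝ := v - u with hr
  have hbxu : bL M x u = Bx := by
    rw [hu, map_add, map_smul, map_smul, hex, hey, bL_single, bL_single, kf_self, hkxy,
        hal, hbe]
    field_simp
    linear_combination Bx * mul_inv_cancel₀ hd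
  have hbyu : bL M y u = By := by
    rw [hu, map_add, map_smul, map_smul, hex, hey, bL_single, bL_single, kf_self, hkyx,
        hal, hbe]
    field_simp
    linear_combination By * mul_inv_cancel₀ hd
  have hbxr : bL M x r = 0 := by rw [hr, map_sub, hbxu, ← hBx, sub_self]
  have hbyr : bL M y r = 0 := by rw [hr, map_sub, hbyu, ← hBy, sub_self]
  have hgr : g r = r := by
    show reflE M x (reflE M y r) = r
    rw [reflE_fix M hbyr, reflE_fix M hbxr]
  have hgmr : (g ^ m) r = r := by
    clear_value r
    induction m with
    | zero => rfl
    | succ k ih =>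
      rw [pow_succ' g k]
      show g ((g^k) r) = r
      rw [ih, hgr]
  have hgmu : (g ^ m) u = u := by
    rw [hu, map_add, map_smul, map_smul, hgmex, hgmey]
  have hv : v = u + r := by rw [hr]; abel
  rw [hv, map_add, hgmu, hgmr]

lemma reflE_liftable : M.IsLiftable (fun x => reflE M x) := by
  intro x y
  rcases eq_or_ne x y with rfl | hxy
  · rw [M.diagonal, pow_one]
    exact reflE_sq M x
  rcases Nat.eq_zero_or_pos (M x y) with h0 | hpos
  · rw [h0, pow_zero]
  · have h2 : 2 ≤ M x y := by
      have := M.off_diagonal x y hxy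
      omega
    exact reflE_order_rank2 hxy h2

/-- Injectivity of the simple reflections. -/
lemma simple_inj : Function.Injective cs.simple := by
  intro i j hij
  by_contra hne
  have h1 : cs.lift ⟨fun x => reflE M x, reflE_liftable⟩ (cs.simple i)
      = cs.lift ⟨fun x => reflE M x, reflE_liftable⟩ (cs.simple j) := by rw [hij]
  rw [cs.lift_apply_simple, cs.lift_apply_simple] at h1
  have h2 : reflE M i (Pi.single i 1) = reflE M j (Pi.single i 1) := by rw [h1]
  rw [reflE_single_self, reflE_single] at h2
  have h3 := congrFun h2 i
  simp only [Pi.neg_apply, Pi.sub_apply, Pi.smul_apply, Pi.single_eq_same,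
    Pi.single_eq_of_ne hne, smul_eq_mul, mul_zero, sub_zero] at h3
  norm_num at h3

end Rank2



variable {B : Type*} {W : Type*} [Group W] {M : CoxeterMatrix B} (cs : CoxeterSystem M W)

section PermRep

variable [DecidableEq W]

lemma simple_conj_eq_iff (i : B) (w t : W) :
    cs.simple i * w * cs.simple i = t ↔ w = cs.simple i * t * cs.simple i := by
  constructor
  · rintro rfl
    rw [mul_assoc (cs.simple i) w (cs.simple i), cs.simple_mul_simple_cancel_left,
      cs.simple_mul_simple_cancel_right]
  · rintro rfl
    rw [mul_assoc (cs.simple i) t (cs.simple i), cs.simple_mul_simple_cancel_left,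
      cs.simple_mul_simple_cancel_right]

lemma conj_eq_iff' (a t u : W) : a * u * a⁻¹ = t ↔ a⁻¹ * t * a = u := by
  constructor <;> rintro rfl <;> group

/-- the basic involution of `W × ZMod 2` attached to a simple reflection -/
def invo (i : B) : (W × ZMod 2) → (W × ZMod 2) :=
  fun p => (cs.simple i * p.1 * cs.simple i, p.2 + (if p.1 = cs.simple i then 1 else 0))

lemma invo_involutive (i : B) : Function.Involutive (invo cs i) := by
  rintro ⟨w, e⟩
  unfold invo
  simp only
  have h2 : (cs.simple i * w * cs.simple i = cs.simple i) ↔ w = cs.simple i := by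
    rw [simple_conj_eq_iff, cs.simple_mul_simple_self, one_mul]
  rw [Prod.mk.injEq]
  constructor
  · rw [mul_assoc (cs.simple i) w (cs.simple i), cs.simple_mul_simple_cancel_left,
      cs.simple_mul_simple_cancel_right]
  · rw [if_congr h2 rfl rfl]
    by_cases hw : w = cs.simple i
    · simp only [hw, if_pos]
      have h11 : (1 : ZMod 2) + 1 = 0 := rfl
      rw [add_assoc, h11, add_zero]
    · simp [hw]

/-- the permutation of `W × ZMod 2` attached to a simple reflection -/
def gp (i : B) : Equiv.Perm (W × ZMod 2) := (invo_involutive cs i).toPerm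

lemma gp_apply (i : B) (w : W) (e : ZMod 2) :
    gp cs i (w, e) = (cs.simple i * w * cs.simple i, e + (if w = cs.simple i then 1 else 0)) :=
  rfl

lemma gp_liftable : M.IsLiftable (gp cs) := by
  intro i j
  set si := cs.simple i with hsi
  set sj := cs.simple j with hsj
  set p := si * sj with hpdef
  set m := M i j with hmdef
  have hp : p ^ m = 1 := cs.simple_mul_simple_pow i j
  have hpinv : p⁻¹ = sj * si := by
    rw [hpdef, mul_inv_rev, hsi, hsj, cs.inv_simple, cs.inv_simple]
  have hsjp : sj * p = p⁻¹ * sj := by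
    rw [hpinv, hpdef, mul_assoc]
  have hstep : ∀ w e, (gp cs i * gp cs j) (w, e) =
      (p * w * p⁻¹, e + ((if w = sj then 1 else 0) + (if w = p⁻¹ * sj then 1 else 0))) := by
    intro w e
    rw [Equiv.Perm.mul_apply, gp_apply, gp_apply]
    rw [Prod.mk.injEq]
    constructor
    · rw [hpdef, hpinv]
      group
      rfl
    · have hcond : (sj * w * sj = si) ↔ (w = p⁻¹ * sj) := by
        rw [hsj, simple_conj_eq_iff cs j, ← hsj, hpinv, mul_assoc]
      rw [if_congr hcond rfl rfl, add_assoc]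
  have hconj : ∀ k : ℕ, p⁻¹ * ((p⁻¹)^k * sj) * p = (p⁻¹)^(k+1+1) * sj := by
    intro k
    calc p⁻¹ * ((p⁻¹)^k * sj) * p = (p⁻¹)^(k+1) * (sj * p) := by
          rw [pow_succ']
          group
      _ = (p⁻¹)^(k+1) * (p⁻¹ * sj) := by rw [hsjp]
      _ = (p⁻¹)^(k+1+1) * sj := by
          rw [pow_succ]
          group
  have hre : ∀ (w : W) (k : ℕ),
      (p * w * p⁻¹ = (p⁻¹)^k * sj) ↔ (w = (p⁻¹)^(k+1+1) * sj) := by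
    intro w k
    rw [conj_eq_iff', hconj k, eq_comm]
  have key : ∀ (n : ℕ) (w : W) (e : ZMod 2), ((gp cs i * gp cs j) ^ n) (w, e) =
      (p ^ n * w * (p ^ n)⁻¹,
        e + ∑ k ∈ Finset.range (2*n), (if w = (p⁻¹) ^ k * sj then (1 : ZMod 2) else 0)) := by
    intro n
    induction n with
    | zero => intro w e; simp
    | succ n ih =>
      intro w e
      rw [pow_succ, Equiv.Perm.mul_apply, hstep, ih]
      rw [Prod.mk.injEq]
      constructor
      · rw [pow_succ]
        group
      · rw [add_assoc]
        congr 1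
        rw [show 2*(n+1) = (2*n+1)+1 by ring, Finset.sum_range_succ' _ (2*n+1),
          Finset.sum_range_succ' _ (2*n)]
        rw [Finset.sum_congr rfl (fun k _ => if_congr (hre w k) rfl rfl)]
        simp only [Nat.zero_add, pow_zero, one_mul, pow_one]
        ring
  show (gp cs i * gp cs j) ^ m = 1
  apply Equiv.ext
  rintro ⟨w, e⟩
  rw [key m w e, hp]
  simp only [one_mul, inv_one, mul_one, Equiv.Perm.one_apply]
  rw [Prod.mk.injEq]
  refine ⟨rfl, ?_⟩
  suffices h : ∑ k ∈ Finset.range (2*m), (if w = (p⁻¹) ^ k * sj then (1 : ZMod 2) else 0) = 0 by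
    rw [h, add_zero]
  have hq : ∀ k : ℕ, (if w = (p⁻¹)^(m+k) * sj then (1:ZMod 2) else 0)
      = (if w = (p⁻¹)^k * sj then (1:ZMod 2) else 0) := by
    intro k
    have hpm : (p⁻¹)^(m+k) = (p⁻¹)^k := by
      rw [pow_add, inv_pow, hp, inv_one, one_mul]
    rw [hpm]
  rw [two_mul, Finset.sum_range_add]
  simp only [hq]
  have h2 : ∀ a : ZMod 2, a + a = 0 := by decide
  exact h2 _

/-- the lifted permutation representation -/
noncomputable def permRep : W →* Equiv.Perm (W × ZMod 2) := cs.lift ⟨gp cs, gp_liftable cs⟩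

lemma permRep_wordProd (ω : List B) (w : W) (e : ZMod 2) :
    permRep cs (cs.wordProd ω) (w, e) =
      (cs.wordProd ω * w * (cs.wordProd ω)⁻¹,
        e + (((cs.rightInvSeq ω).count w : ℕ) : ZMod 2)) := by
  induction ω generalizing e with
  | nil => simp [permRep]
  | cons i ω ih =>
    rw [cs.wordProd_cons, map_mul, Equiv.Perm.mul_apply, ih]
    have happ : permRep cs (cs.simple i) = gp cs i := by
      rw [permRep, cs.lift_apply_simple]
    rw [happ, gp_apply]
    have hris : cs.rightInvSeq (i :: ω)
        = ((cs.wordProd ω)⁻¹ * cs.simple i * cs.wordProd ω) :: cs.rightInvSeq ω := rfl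
    rw [hris, Prod.mk.injEq]
    constructor
    · rw [mul_inv_rev, cs.inv_simple]
      group
    · have hcond : (cs.wordProd ω * w * (cs.wordProd ω)⁻¹ = cs.simple i)
          ↔ ((cs.wordProd ω)⁻¹ * cs.simple i * cs.wordProd ω = w) := conj_eq_iff' _ _ _
      rw [if_congr hcond rfl rfl, List.count_cons]
      push_cast
      rw [add_assoc]
      congr 1
      by_cases hx : (cs.wordProd ω)⁻¹ * cs.simple i * cs.wordProd ω = w
      · simp [hx]
      · simp [hx]

/-- parity of the number of occurrences in the right inversion sequence only
depends on the product of the word -/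
lemma count_ris_parity {σ τ : List B} (h : cs.wordProd σ = cs.wordProd τ) (w : W) :
    (((cs.rightInvSeq σ).count w : ℕ) : ZMod 2) = ((cs.rightInvSeq τ).count w : ℕ) := by
  have h1 := permRep_wordProd cs σ w 0
  have h2 := permRep_wordProd cs τ w 0
  rw [h] at h1
  rw [h1] at h2
  have := congrArg Prod.snd h2
  simpa using this

end PermRep



variable {B : Type*} {W : Type*} [Group W] {M : CoxeterMatrix B} (cs : CoxeterSystem M W)

section Combinatorics

variable [DecidableEq W]

lemma ris_append (α β : List B) :
    cs.rightInvSeq (α ++ β) =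
      (cs.rightInvSeq α).map (fun x => (cs.wordProd β)⁻¹ * x * cs.wordProd β)
        ++ cs.rightInvSeq β := by
  induction α with
  | nil => simp
  | cons i α ih =>
    show cs.rightInvSeq (i :: (α ++ β)) = _
    have h1 : cs.rightInvSeq (i :: (α ++ β))
        = ((cs.wordProd (α ++ β))⁻¹ * cs.simple i * cs.wordProd (α ++ β))
          :: cs.rightInvSeq (α ++ β) := rfl
    have h2 : cs.rightInvSeq (i :: α)
        = ((cs.wordProd α)⁻¹ * cs.simple i * cs.wordProd α) :: cs.rightInvSeq α := rfl
    rw [h1, ih, h2, List.map_cons, cs.wordProd_append]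
    rw [List.cons_append]
    congr 1
    rw [mul_inv_rev]
    group

lemma conj_injective (a : W) : Function.Injective (fun x : W => a⁻¹ * x * a) := by
  intro x y h
  simp only at h
  rw [mul_assoc, mul_assoc] at h
  have h1 := mul_left_cancel h
  have h2 := mul_right_cancel h1
  exact h2

end Combinatorics


section Tprime

variable [DecidableEq W]

lemma count_ris_palindrome : ∀ (υ : List B) (k : B),
    (((cs.rightInvSeq (υ ++ ([k] ++ υ.reverse))).count
        (cs.wordProd υ * cs.simple k * (cs.wordProd υ)⁻¹) : ℕ) : ZMod 2) = 1 := by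
  intro υ
  induction υ with
  | nil =>
    intro k
    simp [rightInvSeq]
  | cons j υ ih =>
    intro k
    set A := cs.simple j with hA
    set T := cs.wordProd υ * cs.simple k * (cs.wordProd υ)⁻¹ with hT
    have hTinv : T⁻¹ = T := by
      rw [hT, mul_inv_rev, mul_inv_rev, cs.inv_simple, inv_inv]
      group
    have hTT : T * T = 1 := by
      nth_rw 1 [← hTinv]
      exact inv_mul_cancel T
    have hAA : A * A = 1 := cs.simple_mul_simple_self j
    have hAinv : A⁻¹ = A := cs.inv_simple j
    have htarget : cs.wordProd (j :: υ) * cs.simple k * (cs.wordProd (j :: υ))⁻¹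
        = A * T * A := by
      rw [cs.wordProd_cons, mul_inv_rev, cs.inv_simple, ← hA, hT]
      group
    set Z := υ ++ ([k] ++ υ.reverse) with hZ
    have hrw : (j :: υ) ++ ([k] ++ (j :: υ).reverse) = j :: (Z ++ [j]) := by
      simp [hZ]
    have hπZ : cs.wordProd Z = T := by
      rw [hZ, cs.wordProd_append, cs.wordProd_append, cs.wordProd_singleton,
        cs.wordProd_reverse, hT]
      group
    have hπZj : cs.wordProd (Z ++ [j]) = T * A := by
      rw [cs.wordProd_append, hπZ, cs.wordProd_singleton, hA]
    have hris1 : cs.rightInvSeq (j :: (Z ++ [j]))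
        = ((cs.wordProd (Z ++ [j]))⁻¹ * cs.simple j * cs.wordProd (Z ++ [j]))
          :: cs.rightInvSeq (Z ++ [j]) := rfl
    have hris2 : cs.rightInvSeq (Z ++ [j])
        = (cs.rightInvSeq Z).map (fun x => A⁻¹ * x * A) ++ [A] := by
      rw [ris_append, cs.wordProd_singleton, ← hA]
      congr 1
      show cs.rightInvSeq [j] = [A]
      simp [rightInvSeq, hA]
    have hhead : (cs.wordProd (Z ++ [j]))⁻¹ * cs.simple j * cs.wordProd (Z ++ [j])
        = A * (T * (A * (T * A))) := by
      rw [hπZj, mul_inv_rev, hTinv, hAinv, ← hA]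
      group
    have claim1 : (A * (T * (A * (T * A))) = A * T * A) ↔ (T = A) := by
      rw [show A * T * A = A * (T * A) from mul_assoc A T A, mul_right_inj,
        mul_right_inj, mul_eq_left, mul_eq_one_iff_eq_inv, hAinv]
    have claim2 : (A = A * T * A) ↔ (T = A) := by
      rw [show A * T * A = A * (T * A) from mul_assoc A T A, eq_comm,
        mul_eq_left, mul_eq_one_iff_eq_inv, hAinv]
    have hmap : ((cs.rightInvSeq Z).map (fun x => A⁻¹ * x * A)).count (A * T * A)
        = (cs.rightInvSeq Z).count T := by
      have he : A * T * A = (fun x : W => A⁻¹ * x * A) T := by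
        simp only
        rw [hAinv]
      rw [he, List.count_map_of_injective _ _ (conj_injective A)]
    have hih : (((cs.rightInvSeq Z).count T : ℕ) : ZMod 2) = 1 := ih k
    rw [hrw, htarget, hris1, hris2]
    rw [List.count_cons, List.count_append, hmap, hhead]
    rw [show (List.count (A * T * A) [A] : ℕ) = if A = A * T * A then 1 else 0 from by
      rw [List.count_cons, List.count_nil]
      simp [beq_iff_eq]]
    simp only [beq_iff_eq, claim1, claim2]
    push_cast
    rw [hih]
    by_cases hTA : T = A
    · rw [if_pos hTA]
      decide
    · rw [if_neg hTA]
      decide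

end Tprime

section Exchange

variable [DecidableEq W]

/-- Strong exchange, membership form, for arbitrary words. -/
lemma mem_ris_of_mul_lt {t : W} (ht : cs.IsReflection t) (ω : List B)
    (hlt : cs.length (cs.wordProd ω * t) < cs.length (cs.wordProd ω)) :
    t ∈ cs.rightInvSeq ω := by
  obtain ⟨σ, hσred, hσ⟩ := cs.exists_reduced_word' (cs.wordProd ω * t)
  have httinv : t * t = 1 := ht.mul_self
  have htinv : t⁻¹ = t := ht.inv
  obtain ⟨u, k, htu⟩ := ht
  obtain ⟨υ, hυ⟩ := cs.wordProd_surjective u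
  set τ := υ ++ ([k] ++ υ.reverse) with hτdef
  have hτ : cs.wordProd τ = t := by
    rw [hτdef, cs.wordProd_append, cs.wordProd_append, cs.wordProd_singleton,
      cs.wordProd_reverse, hυ, htu]
    group
  have hππ : cs.wordProd (σ ++ τ) = cs.wordProd ω := by
    rw [cs.wordProd_append, hτ, ← hσ, mul_assoc, httinv, mul_one]
  have hpar := count_ris_parity cs hππ t
  rw [ris_append, List.count_append] at hpar
  have hmap0 : (((cs.rightInvSeq σ).map
      (fun x => (cs.wordProd τ)⁻¹ * x * cs.wordProd τ)).count t : ℕ) = 0 := by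
    apply List.count_eq_zero.mpr
    intro hmem
    obtain ⟨x, hx, hfx⟩ := List.mem_map.mp hmem
    simp only [hτ] at hfx
    have hxt : x = t := by
      calc x = t * (t⁻¹ * x * t) * t⁻¹ := by group
        _ = t * t * t⁻¹ := by rw [hfx]
        _ = t := by rw [httinv, one_mul, htinv]
    rw [hxt] at hx
    have hinv := (cs.isRightInversion_of_mem_rightInvSeq hσred hx).2
    rw [← hσ, mul_assoc, httinv, mul_one] at hinv
    omega
  rw [hmap0] at hpar
  have hone : (((cs.rightInvSeq τ).count t : ℕ) : ZMod 2) = 1 := by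
    have h1 := count_ris_palindrome cs υ k
    rw [hυ, ← htu] at h1
    exact h1
  by_contra hmem
  rw [List.count_eq_zero.mpr hmem] at hpar
  rw [Nat.zero_add, hone] at hpar
  rw [Nat.cast_zero] at hpar
  exact absurd hpar.symm (by decide)

lemma exists_getD_of_mem_ris (ω : List B) {t : W} (hmem : t ∈ cs.rightInvSeq ω) :
    ∃ j, j < ω.length ∧ (cs.rightInvSeq ω).getD j 1 = t := by
  obtain ⟨j, hj, hget⟩ := List.mem_iff_getElem.mp hmem
  rw [cs.length_rightInvSeq] at hj
  refine ⟨j, hj, ?_⟩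
  rw [List.getD_eq_getElem _ 1 (by rw [cs.length_rightInvSeq]; exact hj)]
  exact hget

lemma getD_ris_eq (ω : List B) {j : ℕ} (hj : j < ω.length) :
    (cs.rightInvSeq ω).getD j 1 =
      (cs.wordProd (ω.drop (j+1)))⁻¹ * cs.simple (ω[j]) * cs.wordProd (ω.drop (j+1)) := by
  rw [cs.getD_rightInvSeq]
  congr 1
  congr 1
  rw [List.getElem?_eq_getElem hj]
  rfl

end Exchange

section Supp

variable [DecidableEq W] [Fintype B] [DecidableEq B]

lemma supp_aux : ∀ (N : ℕ) (ρ : List B), ρ.length ≤ N → ∀ i : B,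
    cs.wordProd ρ = cs.simple i → i ∈ ρ := by
  intro N
  induction N with
  | zero =>
    intro ρ hρ i hi
    rw [List.length_eq_zero_iff.mp (Nat.le_zero.mp hρ)] at hi
    rw [cs.wordProd_nil] at hi
    have h1 := congrArg cs.length hi
    rw [cs.length_one, cs.length_simple] at h1
    omega
  | succ N ihN =>
    intro ρ hρ i hi
    by_cases hred : cs.IsReduced ρ
    · have h1 : ρ.length = 1 := by
        have h2 : cs.length (cs.wordProd ρ) = ρ.length := hred
        rw [hi, cs.length_simple] at h2
        omega
      obtain ⟨x, rfl⟩ := List.length_eq_one_iff.mp h1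
      rw [cs.wordProd_singleton] at hi
      rw [simple_inj cs hi]
      exact List.mem_singleton_self i
    · classical
      have hPex : ∃ n, ¬ cs.IsReduced (ρ.take n) :=
        ⟨ρ.length, by rwa [List.take_length]⟩
      have hn₀spec : ¬ cs.IsReduced (ρ.take (Nat.find hPex)) := Nat.find_spec hPex
      have hn₀le : Nat.find hPex ≤ ρ.length := Nat.find_le (by rwa [List.take_length])
      have hn₀pos : 0 < Nat.find hPex := by
        rcases Nat.eq_zero_or_pos (Nat.find hPex) with h | h
        · exfalso
          apply hn₀spec
          rw [h, List.take_zero]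
          show cs.length (cs.wordProd []) = ([] : List B).length
          simp
        · exact h
      obtain ⟨k, hk⟩ : ∃ k, Nat.find hPex = k + 1 := ⟨Nat.find hPex - 1, by omega⟩
      have hkred : cs.IsReduced (ρ.take k) := by
        by_contra h
        exact Nat.find_min hPex (by omega) h
      have hklt : k < ρ.length := by omega
      have hlen_take : (ρ.take k).length = k := by
        rw [List.length_take]
        omega
      have htake : ρ.take (k+1) = ρ.take k ++ [ρ[k]] := by
        rw [List.take_succ, List.getElem?_eq_getElem hklt]
        rfl
      have hπtake : cs.wordProd (ρ.take (k+1)) = cs.wordProd (ρ.take k) * cs.simple (ρ[k]) := by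
        rw [htake, cs.wordProd_append, cs.wordProd_singleton]
      have hredk : cs.length (cs.wordProd (ρ.take k)) = k := by
        rw [show cs.length (cs.wordProd (ρ.take k)) = (ρ.take k).length from hkred, hlen_take]
      have hltb : cs.length (cs.wordProd (ρ.take k) * cs.simple (ρ[k]))
          < cs.length (cs.wordProd (ρ.take k)) := by
        rcases cs.length_mul_simple (cs.wordProd (ρ.take k)) (ρ[k]) with h | h
        · exfalso
          apply hn₀spec
          rw [hk]
          show cs.length (cs.wordProd (ρ.take (k+1))) = (ρ.take (k+1)).length
          rw [hπtake, h, hredk, List.length_take]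
          omega
        · omega
      have hmem := mem_ris_of_mul_lt cs (cs.isReflection_simple (ρ[k])) (ρ.take k) hltb
      obtain ⟨j, hj, hgetD⟩ := exists_getD_of_mem_ris cs _ hmem
      have herase : cs.wordProd (ρ.take k) * cs.simple (ρ[k])
          = cs.wordProd ((ρ.take k).eraseIdx j) := by
        rw [← hgetD, cs.wordProd_mul_getD_rightInvSeq]
      have hπρ' : cs.wordProd (((ρ.take k).eraseIdx j) ++ ρ.drop (k+1)) = cs.wordProd ρ := by
        rw [cs.wordProd_append, ← herase]
        conv_rhs => rw [← List.take_append_drop (k+1) ρ]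
        rw [cs.wordProd_append, hπtake]
      have hlen' : (((ρ.take k).eraseIdx j) ++ ρ.drop (k+1)).length ≤ N := by
        rw [List.length_append, List.length_eraseIdx, List.length_drop]
        rw [hlen_take] at hj ⊢
        simp only [hj, if_pos]
        omega
      have hmemi := ihN _ hlen' i (by rw [hπρ', hi])
      rcases List.mem_append.mp hmemi with h | h
      · exact List.take_subset k ρ ((List.eraseIdx_sublist _ j).subset h)
      · exact List.drop_subset (k+1) ρ h

end Supp

section Main

variable [DecidableEq W] [Fintype B] [DecidableEq B]

lemma getElem_not_mem_drop {ρ : List B} (h : ρ.Nodup) {j : ℕ} (hj : j < ρ.length) :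
    ρ[j] ∉ ρ.drop (j+1) := by
  intro hmem
  have hsplit : ρ = ρ.take (j+1) ++ ρ.drop (j+1) := (List.take_append_drop (j+1) ρ).symm
  rw [hsplit] at h
  rw [List.nodup_append] at h
  have hjj : j < (ρ.take (j+1)).length := by
    rw [List.length_take]
    omega
  have hmt : ρ[j] ∈ ρ.take (j+1) := by
    have he : (ρ.take (j+1))[j] = ρ[j] := List.getElem_take
    rw [← he]
    exact List.getElem_mem hjj
  exact h.2.2 _ hmt _ hmem rfl

/-- The letter of the exchange site of a right descent of a word
with no duplicate letters. -/
lemma descent_letter {ω : List B} (hnd : ω.Nodup) {i : B}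
    (hlt : cs.length (cs.wordProd ω * cs.simple i) < cs.length (cs.wordProd ω)) :
    ∃ j, ∃ (hj : j < ω.length), ω[j] = i ∧
      cs.wordProd ω * cs.simple i = cs.wordProd (ω.eraseIdx j) := by
  have hmem := mem_ris_of_mul_lt cs (cs.isReflection_simple i) ω hlt
  obtain ⟨j, hj, hgetD⟩ := exists_getD_of_mem_ris cs _ hmem
  have hgetD2 := hgetD
  rw [getD_ris_eq cs ω hj] at hgetD2
  -- hgetD2 : (π d)⁻¹ * s ω[j] * π d = s i  with d = drop (j+1)
  have hb : cs.simple (ω[j])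
      = cs.wordProd (ω.drop (j+1) ++ ([i] ++ (ω.drop (j+1)).reverse)) := by
    rw [cs.wordProd_append, cs.wordProd_append, cs.wordProd_singleton, cs.wordProd_reverse]
    rw [← hgetD2]
    group
  have hsupp := supp_aux cs _ _ (le_refl _) (ω[j]) hb.symm
  have hbi : ω[j] = i := by
    rcases List.mem_append.mp hsupp with h | h
    · exact absurd h (getElem_not_mem_drop hnd hj)
    · rcases List.mem_append.mp h with h | h
      · exact List.mem_singleton.mp h
      · rw [List.mem_reverse] at h
        exact absurd h (getElem_not_mem_drop hnd hj)
  refine ⟨j, hj, hbi, ?_⟩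
  rw [← hgetD, cs.wordProd_mul_getD_rightInvSeq]

/-- A word with no duplicate letters is reduced. -/
lemma nodup_isReduced : ∀ (ρ : List B), ρ.Nodup → cs.IsReduced ρ := by
  intro ρ
  induction ρ using List.reverseRecOn with
  | nil =>
    intro _
    show cs.length (cs.wordProd []) = ([] : List B).length
    simp
  | append_singleton ω' i ih =>
    intro hnd
    have h1 : ω'.Nodup ∧ i ∉ ω' := by
      rw [List.nodup_append] at hnd
      refine ⟨hnd.1, fun hmem => hnd.2.2 _ hmem _ (List.mem_singleton_self i) rfl⟩
    have hred' := ih h1.1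
    show cs.length (cs.wordProd (ω' ++ [i])) = (ω' ++ [i]).length
    rw [cs.wordProd_append, cs.wordProd_singleton, List.length_append,
      List.length_singleton]
    rcases cs.length_mul_simple (cs.wordProd ω') i with h | h
    · rw [h, hred']
    · exfalso
      have hlt : cs.length (cs.wordProd ω' * cs.simple i) < cs.length (cs.wordProd ω') := by
        omega
      obtain ⟨j, hj, hbi, _⟩ := descent_letter cs h1.1 hlt
      apply h1.2
      rw [← hbi]
      exact List.getElem_mem hj

/-- conjugating by an initial descent letter. -/
lemma coxeterShift {ω : List B} (hnd : ω.Nodup) {i : B}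
    (hlt : cs.length (cs.wordProd ω * cs.simple i) < cs.length (cs.wordProd ω)) :
    ∃ ω₂ : List B, ω₂.Perm ω ∧ ω₂.Nodup ∧
      cs.wordProd ω₂ = cs.simple i * cs.wordProd ω * cs.simple i := by
  obtain ⟨j, hj, hbi, herase⟩ := descent_letter cs hnd hlt
  refine ⟨i :: ω.eraseIdx j, ?_, ?_, ?_⟩
  · have hdrop : ω.drop j = ω[j] :: ω.drop (j+1) := List.drop_eq_getElem_cons hj
    have hsplit : ω = ω.take j ++ (i :: ω.drop (j+1)) := by
      conv_lhs => rw [← List.take_append_drop j ω]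
      rw [hdrop, hbi]
    rw [List.eraseIdx_eq_take_drop_succ]
    conv_rhs => rw [hsplit]
    exact (List.perm_middle).symm
  · have hperm : (i :: ω.eraseIdx j).Perm ω := by
      have hdrop : ω.drop j = ω[j] :: ω.drop (j+1) := List.drop_eq_getElem_cons hj
      have hsplit : ω = ω.take j ++ (i :: ω.drop (j+1)) := by
        conv_lhs => rw [← List.take_append_drop j ω]
        rw [hdrop, hbi]
      rw [List.eraseIdx_eq_take_drop_succ]
      conv_rhs => rw [hsplit]
      exact (List.perm_middle).symm
    exact hperm.nodup_iff.mpr hnd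
  · rw [cs.wordProd_cons, ← herase]
    rw [← mul_assoc]

/-- Main step: cyclically commuting a length-additive factorization. -/
lemma main_aux : ∀ (n : ℕ) (v₁ v₂ : W) (ω : List B), ω.Nodup →
    cs.wordProd ω = v₁ * v₂ →
    cs.length (cs.wordProd ω) = cs.length v₁ + cs.length v₂ →
    cs.length v₂ ≤ n →
    ∃ ω₂ : List B, ω₂.Perm ω ∧ cs.wordProd ω₂ = v₂ * v₁ := by
  intro n
  induction n with
  | zero =>
    intro v₁ v₂ ω hnd heq hadd hle
    have hv₂ : v₂ = 1 := cs.length_eq_zero_iff.mp (Nat.le_zero.mp hle)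
    exact ⟨ω, List.Perm.refl ω, by rw [heq, hv₂, mul_one, one_mul]⟩
  | succ n ih =>
    intro v₁ v₂ ω hnd heq hadd hle
    rcases Nat.eq_zero_or_pos (cs.length v₂) with h0 | hpos
    · have hv₂ : v₂ = 1 := cs.length_eq_zero_iff.mp h0
      exact ⟨ω, List.Perm.refl ω, by rw [heq, hv₂, mul_one, one_mul]⟩
    · have hv₂ne : v₂ ≠ 1 := by
        intro h
        rw [h, cs.length_one] at hpos
        omega
      obtain ⟨i, hdesc⟩ := cs.exists_rightDescent_of_ne_one hv₂ne
      have hdesc' : cs.length (v₂ * cs.simple i) < cs.length v₂ := hdesc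
      have hu : cs.length (v₂ * cs.simple i) + 1 = cs.length v₂ := by
        rcases cs.length_mul_simple v₂ i with h | h
        · omega
        · exact h
      have hv₂u : (v₂ * cs.simple i) * cs.simple i = v₂ :=
        cs.simple_mul_simple_cancel_right i
      have hcs : cs.wordProd ω * cs.simple i = v₁ * (v₂ * cs.simple i) := by
        rw [heq, mul_assoc]
      have hlt : cs.length (cs.wordProd ω * cs.simple i) < cs.length (cs.wordProd ω) := by
        calc cs.length (cs.wordProd ω * cs.simple i)
            = cs.length (v₁ * (v₂ * cs.simple i)) := by rw [hcs]
          _ ≤ cs.length v₁ + cs.length (v₂ * cs.simple i) := cs.length_mul_le _ _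
          _ < cs.length v₁ + cs.length v₂ := by omega
          _ = cs.length (cs.wordProd ω) := hadd.symm
      obtain ⟨ω₂, hperm, hnd₂, hπ₂⟩ := coxeterShift cs hnd hlt
      have hredω : cs.IsReduced ω := nodup_isReduced cs ω hnd
      have hredω₂ : cs.IsReduced ω₂ := nodup_isReduced cs ω₂ hnd₂
      have hlen : cs.length (cs.wordProd ω₂) = cs.length (cs.wordProd ω) := by
        rw [hredω, hredω₂, hperm.length_eq]
      have hfact : cs.wordProd ω₂ = (cs.simple i * v₁) * (v₂ * cs.simple i) := by
        rw [hπ₂, heq]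
        group
      have hlen₁ : cs.length (cs.simple i * v₁) = cs.length v₁ + 1 := by
        have hup : cs.length (cs.wordProd ω₂)
            ≤ cs.length (cs.simple i * v₁) + cs.length (v₂ * cs.simple i) := by
          rw [hfact]
          exact cs.length_mul_le _ _
        rcases cs.length_simple_mul v₁ i with h | h
        · exact h
        · omega
      have hadd₂ : cs.length (cs.wordProd ω₂)
          = cs.length (cs.simple i * v₁) + cs.length (v₂ * cs.simple i) := by
        omega
      have hle₂ : cs.length (v₂ * cs.simple i) ≤ n := by omega
      obtain ⟨ω₃, hperm₃, hπ₃⟩ := ih (cs.simple i * v₁) (v₂ * cs.simple i) ω₂ hnd₂ hfact hadd₂ hle₂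
      refine ⟨ω₃, hperm₃.trans hperm, ?_⟩
      rw [hπ₃, ← mul_assoc, mul_assoc v₂ _ _, cs.simple_mul_simple_self, mul_one]

end Main

end CoxAux

theorem coxeter_element_of_length_additive_factorization [Group W] [Finite W]
    {M : CoxeterMatrix B} (cs : CoxeterSystem M W) (c v₁ v₂ : W)
    (hc : IsCoxeterElement cs c) (heq : c = v₁ * v₂)
    (hl : cs.length c = cs.length v₁ + cs.length v₂) :
    IsCoxeterElement cs (v₂ * v₁) := by
  obtain ⟨ω, hnd, hfull, hπ⟩ := hc
  letI : DecidableEq B := Classical.decEq B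
  letI : DecidableEq W := Classical.decEq W
  letI : Fintype B := ⟨ω.toFinset, fun i => List.mem_toFinset.mpr (hfull i)⟩
  obtain ⟨ω₂, hperm, hπ₂⟩ := CoxAux.main_aux cs (cs.length v₂) v₁ v₂ ω hnd
    (by rw [hπ]; exact heq) (by rw [hπ]; exact hl) (le_refl _)
  exact ⟨ω₂, hperm.nodup_iff.mpr hnd, fun i => hperm.mem_iff.mpr (hfull i), hπ₂⟩
end
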